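/- arXiv:2603.27081 — 6 statements merged into one kernel-verified Lean document; each statement's English description precedes it below -/
import Mathlib

section
/- Let n ≥ 2 and let h : ℝ^n → ℝ be continuous and convex on the simplex Δ_n and Fréchet differentiable (in the ambient space ℝ^n) at a point x₀ in the relative interior Δ_n°. Then for any y ∈ ℝ^n, the point x₀ maximizes the function x ↦ ⟨x, y⟩ − h(x) over Δ_n if and only if y − ∇h(x₀) lies in span{𝟙}, i.e., if and only if P_H(y − ∇h(x₀)) = 0. -/
open Matrix MeasureTheory

noncomputable section

/-- The standard probability simplex in `ℝ^n`. -/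
def simplex (n : ℕ) : Set (Fin n → ℝ) := {x | (∀ i, 0 ≤ x i) ∧ ∑ i, x i = 1}

/-- The relative interior of the standard probability simplex. -/
def simplexInt (n : ℕ) : Set (Fin n → ℝ) := {x | (∀ i, 0 < x i) ∧ ∑ i, x i = 1}

/-- The all-ones vector `𝟙`. -/
def ones (n : ℕ) : Fin n → ℝ := fun _ => 1

/-- The orthogonal projection matrix `P_H = I - (1/n) 𝟙 𝟙ᵀ` onto `H = {z : ∑ i, z i = 0}`. -/
def PH (n : ℕ) : Matrix (Fin n) (Fin n) ℝ :=
  1 - (n : ℝ)⁻¹ • Matrix.of fun _ _ => (1 : ℝ)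

/-- The gradient (vector of partial derivatives) of `h`. -/
def grad {n : ℕ} (h : (Fin n → ℝ) → ℝ) (x : Fin n → ℝ) : Fin n → ℝ :=
  fun i => fderiv ℝ h x (Pi.single i 1)

/-- The Hessian matrix of `h`. -/
def hess {n : ℕ} (h : (Fin n → ℝ) → ℝ) (x : Fin n → ℝ) : Matrix (Fin n) (Fin n) ℝ :=
  Matrix.of fun i j =>
    fderiv ℝ (fun y => fderiv ℝ h y (Pi.single j 1)) x (Pi.single i 1)

lemma clm_apply_eq_dot {n : ℕ} (L : (Fin n → ℝ) →L[ℝ] ℝ) (v : Fin n → ℝ) :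
    L v = ∑ i, v i * L (Pi.single i 1) := by
  have hv : v = ∑ i, v i • (Pi.single i (1:ℝ) : Fin n → ℝ) := by
    funext j
    simp [Finset.sum_apply, Pi.single_apply, Finset.sum_ite_eq, mul_comm]
  conv_lhs => rw [hv]
  simp [smul_eq_mul]

lemma PH_apply {n : ℕ} (g : Fin n → ℝ) (i : Fin n) :
    (PH n *ᵥ g) i = g i - (n : ℝ)⁻¹ * ∑ j, g j := by
  simp [PH, Matrix.mulVec, dotProduct, Matrix.one_apply, sub_mul, ite_mul,
    Finset.sum_sub_distrib, Finset.mul_sum]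

/-- Subgradient inequality from convexity. -/
lemma subgrad {n : ℕ} {h : (Fin n → ℝ) → ℝ} (hconv : ConvexOn ℝ (simplex n) h)
    {x₀ : Fin n → ℝ} (hx₀ : x₀ ∈ simplex n) (hdiff : DifferentiableAt ℝ h x₀)
    {x : Fin n → ℝ} (hx : x ∈ simplex n) :
    h x₀ + fderiv ℝ h x₀ (x - x₀) ≤ h x := by
  set φ : ℝ → ℝ := fun t => h (x₀ + t • (x - x₀)) with hφ
  -- φ is convex on Icc 0 1
  have hφconv : ConvexOn ℝ (Set.Icc (0:ℝ) 1) φ := by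
    constructor
    · exact convex_Icc 0 1
    · intro a ha b hb p q hp hq hpq
      have hmem : ∀ t : ℝ, t ∈ Set.Icc (0:ℝ) 1 → x₀ + t • (x - x₀) ∈ simplex n := by
        intro t ht
        have := hconv.1 hx₀ hx (by linarith [ht.2] : 0 ≤ 1 - t) ht.1 (by ring)
        convert this using 1
        funext j; simp; ring
      have key := hconv.2 (hmem a ha) (hmem b hb) hp hq hpq
      convert key using 2
      funext j; simp
      linear_combination (-(x₀ j)) * hpq
  -- φ has derivative fderiv h x₀ (x - x₀) at 0
  have hcurve : HasDerivAt (fun t : ℝ => x₀ + t • (x - x₀)) (x - x₀) 0 := by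
    have : HasDerivAt (fun t : ℝ => t • (x - x₀)) ((1:ℝ) • (x - x₀)) 0 :=
      (hasDerivAt_id 0).smul_const (x - x₀)
    simpa using this.const_add x₀
  have hφ0 : (fun t : ℝ => x₀ + t • (x - x₀)) 0 = x₀ := by simp
  have hd : HasDerivAt φ (fderiv ℝ h x₀ (x - x₀)) 0 := by
    have h2 : HasFDerivAt h (fderiv ℝ h x₀) ((fun t : ℝ => x₀ + t • (x - x₀)) 0) := by
      rw [hφ0]; exact hdiff.hasFDerivAt
    exact h2.comp_hasDerivAt 0 hcurve
  have hslope := hφconv.le_slope_of_hasDerivAt (by simp : (0:ℝ) ∈ Set.Icc (0:ℝ) 1)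
    (by simp : (1:ℝ) ∈ Set.Icc (0:ℝ) 1) one_pos hd
  have h0 : φ 0 = h x₀ := by simp [hφ]
  have h1 : φ 1 = h x := by simp [hφ]
  rw [slope_def_field, h0, h1] at hslope
  simp at hslope
  rw [show (fderiv ℝ h x₀) (x - x₀) = (fderiv ℝ h x₀) x - (fderiv ℝ h x₀) x₀ from map_sub _ _ _]
  linarith

/-- First-order optimality condition for FTRL choice maps: for `h`
continuous and convex on the simplex and Fréchet differentiable at an interior point `x₀`,
the point `x₀` maximizes `x ↦ ⟨x, y⟩ - h x` over the simplex iff `y - ∇h(x₀) ∈ span{𝟙}`,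
i.e. iff `P_H (y - ∇h(x₀)) = 0`. -/
theorem stmt0 {n : ℕ} (hn : 2 ≤ n) (h : (Fin n → ℝ) → ℝ)
    (hcont : ContinuousOn h (simplex n)) (hconv : ConvexOn ℝ (simplex n) h)
    (x₀ : Fin n → ℝ) (hx₀ : x₀ ∈ simplexInt n)
    (hdiff : DifferentiableAt ℝ h x₀) (y : Fin n → ℝ) :
    ((∀ x ∈ simplex n, x ⬝ᵥ y - h x ≤ x₀ ⬝ᵥ y - h x₀) ↔
      y - grad h x₀ ∈ Submodule.span ℝ {ones n}) ∧
    (y - grad h x₀ ∈ Submodule.span ℝ {ones n} ↔ PH n *ᵥ (y - grad h x₀) = 0) := by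
  have hnpos : (0:ℝ) < n := by positivity
  have hx₀s : x₀ ∈ simplex n := ⟨fun i => (hx₀.1 i).le, hx₀.2⟩
  set g : Fin n → ℝ := y - grad h x₀ with hg
  have hgd : ∀ v : Fin n → ℝ, fderiv ℝ h x₀ v = v ⬝ᵥ grad h x₀ := by
    intro v
    rw [clm_apply_eq_dot (fderiv ℝ h x₀) v]
    rfl
  constructor
  · constructor
    · -- optimality → span
      intro hopt
      -- g i = g j for all i j
      have key : ∀ i j : Fin n, g i = g j := by
        intro i j
        rcases eq_or_ne i j with rfl | hij
        · rfl
        set v : Fin n → ℝ := Pi.single i 1 - Pi.single j 1 with hv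
        set ε : ℝ := min (x₀ i) (x₀ j) with hε
        have hεpos : 0 < ε := lt_min (hx₀.1 i) (hx₀.1 j)
        -- x₀ + t • v ∈ simplex for |t| ≤ ε
        have hmem : ∀ t : ℝ, |t| ≤ ε → x₀ + t • v ∈ simplex n := by
          intro t ht
          have ht1 : -ε ≤ t := neg_le_of_abs_le ht
          have ht2 : t ≤ ε := le_of_abs_le ht
          constructor
          · intro k
            have hvk : v k = (if k = i then 1 else 0) - (if k = j then 1 else 0) := by
              simp [hv, Pi.single_apply]
            simp only [Pi.add_apply, Pi.smul_apply, smul_eq_mul, hvk]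
            rcases eq_or_ne k i with rfl | hki
            · have hε' : ε ≤ x₀ k := min_le_left _ _
              have hkj := hij
              have he : ((if k = k then (1:ℝ) else 0) - if k = j then 1 else 0) = 1 := by
                simp [hkj]
              rw [he]; nlinarith
            rcases eq_or_ne k j with rfl | hkj
            · have hε' : ε ≤ x₀ k := min_le_right _ _
              have he : ((if k = i then (1:ℝ) else 0) - if k = k then 1 else 0) = -1 := by
                simp [hki]
              rw [he]; nlinarith
            · have he : ((if k = i then (1:ℝ) else 0) - if k = j then 1 else 0) = 0 := by
                simp [hki, hkj]
              rw [he]; simpa using (hx₀.1 k).le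
          · have : ∑ k, (x₀ k + t * v k) = ∑ k, x₀ k + t * ∑ k, v k := by
              rw [Finset.sum_add_distrib, Finset.mul_sum]
            have hvs : ∑ k, v k = 0 := by
              simp [hv, Finset.sum_sub_distrib]
            simp only [Pi.add_apply, Pi.smul_apply, smul_eq_mul]
            rw [this, hvs, hx₀.2]; ring
        -- ψ has local max at 0
        set ψ : ℝ → ℝ := fun t => (x₀ + t • v) ⬝ᵥ y - h (x₀ + t • v) with hψ
        have hlm : IsLocalMax ψ 0 := by
          have hnhds : Set.Icc (-ε) ε ∈ nhds (0:ℝ) :=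
            Icc_mem_nhds (by linarith) hεpos
          filter_upwards [hnhds] with t ht
          have habs : |t| ≤ ε := abs_le.mpr ⟨ht.1, ht.2⟩
          have := hopt _ (hmem t habs)
          simpa [hψ] using this
        have hcurve : HasDerivAt (fun t : ℝ => x₀ + t • v) v 0 := by
          have : HasDerivAt (fun t : ℝ => t • v) ((1:ℝ) • v) 0 :=
            (hasDerivAt_id 0).smul_const v
          simpa using this.const_add x₀
        have hc0 : (fun t : ℝ => x₀ + t • v) 0 = x₀ := by simp
        have hd1 : HasDerivAt (fun t : ℝ => (x₀ + t • v) ⬝ᵥ y) (v ⬝ᵥ y) 0 := by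
          have : HasDerivAt (fun t : ℝ => ∑ k, (x₀ k + t * v k) * y k)
              (∑ k, v k * y k) 0 := by
            apply HasDerivAt.fun_sum
            intro k _
            have : HasDerivAt (fun t : ℝ => (x₀ k + t * v k) * y k) ((v k) * y k) 0 := by
              have h1 : HasDerivAt (fun t : ℝ => x₀ k + t * v k) (v k) 0 := by
                simpa using ((hasDerivAt_id (0:ℝ)).mul_const (v k)).const_add (x₀ k)
              simpa using h1.mul_const (y k)
            exact this
          simpa [dotProduct] using this
        have hd2 : HasDerivAt (fun t : ℝ => h (x₀ + t • v)) (fderiv ℝ h x₀ v) 0 := by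
          have h2 : HasFDerivAt h (fderiv ℝ h x₀) ((fun t : ℝ => x₀ + t • v) 0) := by
            rw [hc0]; exact hdiff.hasFDerivAt
          exact h2.comp_hasDerivAt 0 hcurve
        have hdψ : HasDerivAt ψ (v ⬝ᵥ y - fderiv ℝ h x₀ v) 0 := hd1.sub hd2
        have hzero := hlm.hasDerivAt_eq_zero hdψ
        have : v ⬝ᵥ y - v ⬝ᵥ grad h x₀ = 0 := by rw [← hgd v]; exact hzero
        have hvd : v ⬝ᵥ g = 0 := by
          rw [hg]
          have : v ⬝ᵥ y - v ⬝ᵥ grad h x₀ = v ⬝ᵥ (y - grad h x₀) := by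
            simp [dotProduct, Finset.sum_sub_distrib, sub_mul, mul_sub]
          rw [← this]; assumption
        have : g i - g j = 0 := by
          have : v ⬝ᵥ g = g i - g j := by
            simp [hv, dotProduct, sub_mul, Finset.sum_sub_distrib,
              Pi.single_apply, ite_mul, Finset.sum_ite_eq', hij]
          linarith [this ▸ hvd]
        linarith
      -- hence g = g i0 • ones
      have hn0 : 0 < n := by omega
      rw [Submodule.mem_span_singleton]
      refine ⟨g ⟨0, hn0⟩, ?_⟩
      funext i
      simp [ones, key i ⟨0, hn0⟩]
    · -- span → optimality
      rw [Submodule.mem_span_singleton]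
      rintro ⟨c, hc⟩ x hx
      have hsub := subgrad hconv hx₀s hdiff hx
      have hfd : fderiv ℝ h x₀ (x - x₀) = (x - x₀) ⬝ᵥ grad h x₀ := hgd _
      have hdotg : (x - x₀) ⬝ᵥ g = 0 := by
        have hgc : g = fun _ => c := by
          rw [← hc]; funext i; simp [ones]
        rw [hgc]
        simp [dotProduct, sub_mul, Finset.sum_sub_distrib, ← Finset.sum_mul,
          hx.2, hx₀.2]
      have hexp : (x - x₀) ⬝ᵥ g = (x ⬝ᵥ y - x₀ ⬝ᵥ y) - (x - x₀) ⬝ᵥ grad h x₀ := by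
        simp [hg, dotProduct, Finset.sum_sub_distrib, sub_mul, mul_sub]
      rw [hfd] at hsub
      have : x ⬝ᵥ y - x₀ ⬝ᵥ y = (x - x₀) ⬝ᵥ grad h x₀ := by linarith [hexp, hdotg]
      linarith
  · -- second iff
    constructor
    · rw [Submodule.mem_span_singleton]
      rintro ⟨c, hc⟩
      funext i
      rw [PH_apply]
      have hgc : ∀ j, g j = c := by intro j; rw [← hc]; simp [ones]
      simp [hgc, Finset.sum_const, Finset.card_univ]
      field_simp
      ring
    · intro hPH
      rw [Submodule.mem_span_singleton]
      refine ⟨(n:ℝ)⁻¹ * ∑ j, g j, ?_⟩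
      funext i
      have := congrFun hPH i
      rw [PH_apply] at this
      simp only [Pi.zero_apply] at this
      simp [ones]
      linarith
end
end

section
/- Let n ≥ 2 and let h : ℝ^n → ℝ be twice continuously differentiable on an open set U ⊆ ℝ^n containing Δ_n°, with Hessian ∇²h(x) positive definite for every x ∈ Δ_n°. Then the set M := {P_H ∇h(x) : x ∈ Δ_n°} is a nonempty, open (in the subspace topology of H), and connected subset of the hyperplane H. -/
open Matrix MeasureTheory

noncomputable section

namespace Stmt3Aux

/-- Pointwise formula for `PH *ᵥ y`. -/
lemma PH_mulVec_apply {n : ℕ} (y : Fin n → ℝ) (i : Fin n) :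
    (PH n *ᵥ y) i = y i - (n : ℝ)⁻¹ * ∑ j, y j := by
  simp only [PH, Matrix.sub_mulVec, Matrix.smul_mulVec, Matrix.one_mulVec,
    Pi.sub_apply, Pi.smul_apply, smul_eq_mul]
  congr 1
  simp [Matrix.mulVec, dotProduct]

lemma sum_PH_mulVec {n : ℕ} (hn : (n : ℝ) ≠ 0) (y : Fin n → ℝ) :
    ∑ i, (PH n *ᵥ y) i = 0 := by
  simp only [PH_mulVec_apply, Finset.sum_sub_distrib, Finset.sum_const,
    Finset.card_univ, Fintype.card_fin, nsmul_eq_mul]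
  field_simp
  ring

lemma convex_simplexInt (n : ℕ) : Convex ℝ (simplexInt n) := by
  intro x hx y hy a b ha hb hab
  have hpos : 0 < a ∨ 0 < b := by
    by_contra hc
    push_neg at hc
    have : a = 0 := le_antisymm hc.1 ha
    have : b = 0 := le_antisymm hc.2 hb
    simp_all
  constructor
  · intro i
    have hxi := hx.1 i
    have hyi := hy.1 i
    rcases hpos with hpa | hpb
    · exact add_pos_of_pos_of_nonneg (mul_pos hpa hxi)
        (mul_nonneg hb hyi.le)
    · exact add_pos_of_nonneg_of_pos (mul_nonneg ha hxi.le)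
        (mul_pos hpb hyi)
  · have : ∑ i, (a * x i + b * y i) = a * ∑ i, x i + b * ∑ i, y i := by
      rw [Finset.sum_add_distrib, Finset.mul_sum, Finset.mul_sum]
    simpa [this, hx.2, hy.2] using hab

end Stmt3Aux

open Stmt3Aux in
/-- Under the C² and positive-definite-Hessian hypotheses, the set
`M = {P_H ∇h(x) : x ∈ Δ_n°}` is a nonempty subset of the hyperplane `H`, open in the
subspace topology of `H`, and connected. -/
theorem stmt3 {n : ℕ} (hn : 2 ≤ n) (h : (Fin n → ℝ) → ℝ)
    (U : Set (Fin n → ℝ)) (hU : IsOpen U) (hUsub : simplexInt n ⊆ U)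
    (hC2 : ContDiffOn ℝ 2 h U)
    (hpos : ∀ x ∈ simplexInt n, ∀ v : Fin n → ℝ, v ≠ 0 → 0 < v ⬝ᵥ (hess h x *ᵥ v)) :
    ((fun x => PH n *ᵥ grad h x) '' simplexInt n).Nonempty ∧
    (∀ z ∈ (fun x => PH n *ᵥ grad h x) '' simplexInt n, ∑ i, z i = 0) ∧
    IsOpen (Subtype.val ⁻¹' ((fun x => PH n *ᵥ grad h x) '' simplexInt n) :
      Set {z : Fin n → ℝ | ∑ i, z i = 0}) ∧
    IsConnected ((fun x => PH n *ᵥ grad h x) '' simplexInt n) := by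
  classical
  have hn0 : 0 < n := lt_of_lt_of_le two_pos hn
  have hnR : (n : ℝ) ≠ 0 := Nat.cast_ne_zero.mpr hn0.ne'
  set Φ : (Fin n → ℝ) → (Fin n → ℝ) := fun x => PH n *ᵥ grad h x with hΦdef
  set M : Set (Fin n → ℝ) := Φ '' simplexInt n with hMdef
  -- the barycenter lies in the open simplex
  have hx0 : (fun _ => (n : ℝ)⁻¹) ∈ simplexInt n := by
    constructor
    · intro i
      positivity
    · simp [Finset.sum_const, Finset.card_univ]
      field_simp
  have hne : (simplexInt n).Nonempty := ⟨_, hx0⟩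
  -- strict differentiability of grad h on U
  set B : (Fin n → ℝ) → (Fin n → ℝ) →L[ℝ] (Fin n → ℝ) := fun x =>
    ContinuousLinearMap.pi fun i =>
      fderiv ℝ (fun y => fderiv ℝ h y (Pi.single i 1)) x with hBdef
  have hgrad : ∀ x ∈ U, HasStrictFDerivAt (grad h) (B x) x := by
    intro x hx
    apply hasStrictFDerivAt_pi.2
    intro i
    have h2 : ContDiffAt ℝ 2 h x := hC2.contDiffAt (hU.mem_nhds hx)
    have hC1 : ContDiffAt ℝ 1 (fun y => fderiv ℝ h y (Pi.single i 1)) x := by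
      have := h2.fderiv_right (m := 1) (by norm_num)
      exact this.clm_apply contDiffAt_const
    exact hC1.hasStrictFDerivAt one_ne_zero
  -- the linear maps
  set PHL : (Fin n → ℝ) →L[ℝ] (Fin n → ℝ) :=
    LinearMap.toContinuousLinearMap (Matrix.mulVecLin (PH n)) with hPHLdef
  set sL : (Fin n → ℝ) →L[ℝ] (Fin n → ℝ) :=
    LinearMap.toContinuousLinearMap
      ((LinearMap.toSpanSingleton ℝ _ (ones n)).comp (∑ i, LinearMap.proj i)) with hsLdef
  have hsL_apply : ∀ v : Fin n → ℝ, sL v = (∑ i, v i) • ones n := by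
    intro v
    simp [hsLdef, LinearMap.toSpanSingleton, LinearMap.sum_apply]
  have hPHL_apply : ∀ v : Fin n → ℝ, PHL v = PH n *ᵥ v := fun v => rfl
  -- the auxiliary full-dimensional map F
  set F : (Fin n → ℝ) → (Fin n → ℝ) := fun y => Φ y + ((∑ i, y i) • ones n - ones n)
    with hFdef
  have hFsimplex : ∀ x ∈ simplexInt n, F x = Φ x := by
    intro x hx
    simp [hFdef, hx.2]
  have hΦstrict : ∀ x ∈ U, HasStrictFDerivAt Φ (PHL.comp (B x)) x := by
    intro x hx
    exact PHL.hasStrictFDerivAt.comp x (hgrad x hx)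
  have hFstrict : ∀ x ∈ U, HasStrictFDerivAt F (PHL.comp (B x) + sL) x := by
    intro x hx
    refine (hΦstrict x hx).add ?_
    have h1 : HasStrictFDerivAt (fun y : Fin n → ℝ => sL y) sL x := sL.hasStrictFDerivAt
    have h2 := h1.sub_const (ones n)
    convert h2 using 2 with y
    rw [hsL_apply]
  -- B x in terms of the Hessian
  have hBval : ∀ x, ∀ v : Fin n → ℝ, B x v = (hess h x)ᵀ *ᵥ v := by
    intro x v
    funext i
    have hv : v = ∑ j, v j • (Pi.single j 1 : Fin n → ℝ) := by
      funext k
      simp [Pi.single_apply, Finset.sum_apply, mul_comm]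
    have : B x v i = fderiv ℝ (fun y => fderiv ℝ h y (Pi.single i 1)) x v := rfl
    rw [this]
    conv_lhs => rw [hv]
    rw [map_sum]
    simp only [_root_.map_smul]
    simp [Matrix.mulVec, dotProduct, hess, Matrix.transpose_apply, mul_comm]
  -- injectivity of the derivative of F on the open simplex
  have hinj : ∀ x ∈ simplexInt n, Function.Injective (PHL.comp (B x) + sL) := by
    intro x hx
    rw [injective_iff_map_eq_zero]
    intro v hv
    by_contra hv0
    have hDv : PH n *ᵥ ((hess h x)ᵀ *ᵥ v) + (∑ i, v i) • ones n = 0 := by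
      have := hv
      simpa [ContinuousLinearMap.add_apply, hPHL_apply, hsL_apply, hBval] using this
    -- sum of components gives ∑ v = 0
    have hsum : ∑ i, v i = 0 := by
      have h1 := congrArg (fun w => ∑ i, w i) hDv
      simp only [Pi.add_apply, Finset.sum_add_distrib, Pi.smul_apply, smul_eq_mul,
        Pi.zero_apply, Finset.sum_const, Finset.card_univ, Fintype.card_fin] at h1
      rw [sum_PH_mulVec hnR] at h1
      simp only [ones, mul_one, zero_add, Finset.sum_const, Finset.card_univ,
        Fintype.card_fin, nsmul_eq_mul] at h1
      have : (∑ i, v i) * (n : ℝ) = 0 := by linarith [h1]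
      exact (mul_eq_zero.mp this).resolve_right hnR
    have hPHw : PH n *ᵥ ((hess h x)ᵀ *ᵥ v) = 0 := by
      rw [hsum, zero_smul, add_zero] at hDv
      exact hDv
    -- so the Hessian-transpose image is a multiple of 𝟙
    set w := (hess h x)ᵀ *ᵥ v with hwdef
    have hwconst : ∀ i, w i = (n : ℝ)⁻¹ * ∑ j, w j := by
      intro i
      have := congrFun hPHw i
      rw [PH_mulVec_apply] at this
      simp only [Pi.zero_apply] at this
      linarith
    have hdot0 : v ⬝ᵥ w = 0 := by
      have : v ⬝ᵥ w = ∑ i, v i * ((n : ℝ)⁻¹ * ∑ j, w j) := by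
        unfold dotProduct
        exact Finset.sum_congr rfl fun i _ => by rw [hwconst i]
      rw [this, ← Finset.sum_mul, hsum, zero_mul]
    have hdot : v ⬝ᵥ w = v ⬝ᵥ (hess h x *ᵥ v) := by
      rw [hwdef, Matrix.dotProduct_mulVec, Matrix.vecMul_transpose, dotProduct_comm]
    have := hpos x hx v hv0
    rw [← hdot, hdot0] at this
    exact lt_irrefl 0 this
  -- F maps neighborhoods of points of the simplex to neighborhoods
  have hmap : ∀ x ∈ simplexInt n, Filter.map F (nhds x) = nhds (F x) := by
    intro x hx
    have hD := hFstrict x (hUsub hx)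
    set D : (Fin n → ℝ) →ₗ[ℝ] (Fin n → ℝ) := (PHL.comp (B x) + sL).toLinearMap with hDdef
    have hDinj : Function.Injective D := hinj x hx
    set e : (Fin n → ℝ) ≃L[ℝ] (Fin n → ℝ) :=
      (LinearEquiv.ofInjectiveEndo D hDinj).toContinuousLinearEquiv with hedef
    have hcoe : (e : (Fin n → ℝ) →L[ℝ] (Fin n → ℝ)) = PHL.comp (B x) + sL := by
      ext v
      rfl
    have hD' : HasStrictFDerivAt F (e : (Fin n → ℝ) →L[ℝ] (Fin n → ℝ)) x := by
      rw [hcoe]; exact hD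
    exact hD'.map_nhds_eq_of_equiv
  -- the open "fattened" simplex
  set V : Set (Fin n → ℝ) := U ∩ {y | ∀ i, 0 < y i} with hVdef
  have hVopen : IsOpen V := by
    refine hU.inter ?_
    have : {y : Fin n → ℝ | ∀ i, 0 < y i} = ⋂ i, {y | 0 < y i} := by
      ext y; simp [Set.mem_iInter]
    rw [this]
    exact isOpen_iInter_of_finite fun i =>
      isOpen_lt continuous_const (continuous_apply i)
  have hSV : simplexInt n ⊆ V := fun x hx => ⟨hUsub hx, hx.1⟩
  -- the witnessing open set
  set W : Set (Fin n → ℝ) := interior (F '' V) with hWdef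
  have hMW : ∀ x ∈ simplexInt n, Φ x ∈ W := by
    intro x hx
    rw [mem_interior_iff_mem_nhds, ← hFsimplex x hx, ← hmap x hx]
    exact Filter.image_mem_map (hVopen.mem_nhds (hSV hx))
  have hWM : ∀ z ∈ W, (∑ i, z i = 0) → z ∈ M := by
    intro z hz hzsum
    obtain ⟨y, hyV, hyz⟩ := interior_subset hz
    have hFy : ∑ i, F y i = ((∑ i, y i) - 1) * n := by
      simp only [hFdef, Pi.add_apply, Pi.sub_apply, Pi.smul_apply, smul_eq_mul, ones,
        Finset.sum_add_distrib, Finset.sum_sub_distrib, Finset.sum_const, Finset.card_univ,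
        Fintype.card_fin, nsmul_eq_mul, mul_one]
      rw [sum_PH_mulVec hnR]
      ring
    have hysum : ∑ i, y i = 1 := by
      rw [hyz] at hFy
      rw [hzsum] at hFy
      have := hFy.symm
      rcases mul_eq_zero.mp this with h1 | h2
      · linarith
      · exact absurd h2 hnR
    have hyS : y ∈ simplexInt n := ⟨hyV.2, hysum⟩
    exact ⟨y, hyS, by rw [← hyz, hFsimplex y hyS]⟩
  -- membership of M in the hyperplane
  have hMH : ∀ z ∈ M, ∑ i, z i = 0 := by
    rintro z ⟨x, _, rfl⟩
    exact sum_PH_mulVec hnR (grad h x)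
  refine ⟨⟨Φ _, Set.mem_image_of_mem Φ hx0⟩, hMH, ?_, ?_⟩
  · -- openness in the subspace topology
    have hkey : (Subtype.val ⁻¹' M : Set {z : Fin n → ℝ | ∑ i, z i = 0}) =
        Subtype.val ⁻¹' W := by
      ext ⟨z, hz⟩
      simp only [Set.mem_preimage]
      constructor
      · rintro ⟨x, hx, rfl⟩
        exact hMW x hx
      · intro hzW
        exact hWM z hzW hz
    rw [hkey]
    exact isOpen_interior.preimage continuous_subtype_val
  · -- connectedness
    have hconn : IsConnected (simplexInt n) :=
      ⟨hne, (convex_simplexInt n).isPreconnected⟩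
    refine hconn.image Φ ?_
    intro x hx
    exact ((hΦstrict x (hUsub hx)).continuousAt).continuousWithinAt
end
end

section
/- Let n ≥ 2 and let h : ℝ^n → ℝ be continuous and convex on Δ_n, C^∞ on an open set U ⊆ ℝ^n containing Δ_n°, with Hessian ∇²h(x) positive definite for every x ∈ Δ_n°. Define W := {∇h(x) + c·𝟙 : x ∈ Δ_n°, c ∈ ℝ}. Then W is an open subset of ℝ^n, and there exists a C^∞ map q : W → ℝ^n such that for every y ∈ W, q(y) lies in Δ_n° and is the unique maximizer of x ↦ ⟨x, y⟩ − h(x) over Δ_n. -/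
open Matrix MeasureTheory

noncomputable section

namespace Stmt5Aux

/-- coordinate sum as a continuous linear map -/
def sumCLM (n : ℕ) : (Fin n → ℝ) →L[ℝ] ℝ := ∑ i, ContinuousLinearMap.proj i

@[simp] lemma sumCLM_apply {n : ℕ} (z : Fin n → ℝ) : sumCLM n z = ∑ i, z i := by
  simp [sumCLM]

/-- dot product with a fixed vector as a continuous linear map -/
def dotCLM {n : ℕ} (v : Fin n → ℝ) : (Fin n → ℝ) →L[ℝ] ℝ :=
  ∑ j, v j • ContinuousLinearMap.proj j

@[simp] lemma dotCLM_apply {n : ℕ} (v w : Fin n → ℝ) : dotCLM v w = v ⬝ᵥ w := by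
  simp [dotCLM, dotProduct]

/-- evaluation of a functional on the standard basis, as a CLM -/
def phiCLM (n : ℕ) : ((Fin n → ℝ) →L[ℝ] ℝ) →L[ℝ] (Fin n → ℝ) :=
  ContinuousLinearMap.pi fun j => ContinuousLinearMap.apply ℝ ℝ (Pi.single j 1)

@[simp] lemma phiCLM_apply {n : ℕ} (ℓ : (Fin n → ℝ) →L[ℝ] ℝ) (j : Fin n) :
    phiCLM n ℓ j = ℓ (Pi.single j 1) := rfl

lemma grad_eq {n : ℕ} (h : (Fin n → ℝ) → ℝ) : grad h = fun x => phiCLM n (fderiv ℝ h x) := rfl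

/-- row-vector-times-Hessian as a CLM -/
def hessCLM {n : ℕ} (h : (Fin n → ℝ) → ℝ) (x : Fin n → ℝ) : (Fin n → ℝ) →L[ℝ] (Fin n → ℝ) :=
  LinearMap.toContinuousLinearMap (hess h x).vecMulLinear

@[simp] lemma hessCLM_apply {n : ℕ} (h : (Fin n → ℝ) → ℝ) (x v : Fin n → ℝ) :
    hessCLM h x v = v ᵥ* hess h x := rfl

lemma single_eq_smul {n : ℕ} (i : Fin n) (r : ℝ) :
    (Pi.single i r : Fin n → ℝ) = r • (Pi.single i (1:ℝ) : Fin n → ℝ) := by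
  funext j
  rcases eq_or_ne j i with rfl | hj
  · simp
  · simp [Pi.single_apply, hj]

lemma clm_dot {n : ℕ} (ℓ : (Fin n → ℝ) →L[ℝ] ℝ) (v : Fin n → ℝ) :
    ℓ v = (fun i => ℓ (Pi.single i 1)) ⬝ᵥ v := by
  conv_lhs => rw [← Finset.univ_sum_single v]
  rw [map_sum]
  simp only [dotProduct]
  refine Finset.sum_congr rfl fun i _ => ?_
  rw [single_eq_smul i (v i), _root_.map_smul]
  simp [mul_comm]

lemma fderiv_eq_grad_dot {n : ℕ} (h : (Fin n → ℝ) → ℝ) (x v : Fin n → ℝ) :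
    fderiv ℝ h x v = grad h x ⬝ᵥ v := clm_dot _ v

variable {n : ℕ} {h : (Fin n → ℝ) → ℝ} {U : Set (Fin n → ℝ)}

lemma grad_smooth (hU : IsOpen U) (hs : ContDiffOn ℝ (⊤:ℕ∞) h U) :
    ContDiffOn ℝ (⊤:ℕ∞) (grad h) U := by
  have h1 : ContDiffOn ℝ (⊤:ℕ∞) (fderiv ℝ h) U := hs.fderiv_of_isOpen hU (by simp)
  exact ((phiCLM n).contDiff.comp_contDiffOn h1).congr fun x _ => rfl

lemma hasFDerivAt_grad (hU : IsOpen U) (hs : ContDiffOn ℝ (⊤:ℕ∞) h U) {x : Fin n → ℝ}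
    (hx : x ∈ U) : HasFDerivAt (grad h) (hessCLM h x) x := by
  have hca : ContDiffAt ℝ (⊤:ℕ∞) h x := hs.contDiffAt (hU.mem_nhds hx)
  have hd : ContDiffAt ℝ (⊤:ℕ∞) (fderiv ℝ h) x := hca.fderiv_right (by simp)
  have hB : HasFDerivAt (fderiv ℝ h) (fderiv ℝ (fderiv ℝ h) x) x :=
    (hd.differentiableAt (by simp)).hasFDerivAt
  set B := fderiv ℝ (fderiv ℝ h) x with hBdef
  have hentry : ∀ i j, hess h x i j = B (Pi.single i 1) (Pi.single j 1) := by
    intro i j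
    have hcomp :
        HasFDerivAt (fun y => fderiv ℝ h y (Pi.single j 1))
          ((ContinuousLinearMap.apply ℝ ℝ (Pi.single j 1)).comp B) x := by
      have := (ContinuousLinearMap.apply ℝ ℝ (Pi.single j 1)).hasFDerivAt.comp x hB
      simpa [Function.comp_def] using this
    have := hcomp.fderiv
    simp only [hess, Matrix.of_apply]
    rw [this]
    rfl
  have hclm : (phiCLM n).comp B = hessCLM h x := by
    apply ContinuousLinearMap.ext
    intro v
    funext j
    have : B v (Pi.single j 1) = (fun i => B (Pi.single i 1) (Pi.single j 1)) ⬝ᵥ v := by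
      exact clm_dot ((ContinuousLinearMap.apply ℝ ℝ (Pi.single j 1)).comp B) v
    simp only [ContinuousLinearMap.comp_apply, phiCLM_apply, hessCLM_apply]
    rw [this]
    simp only [vecMul, dotProduct]
    refine Finset.sum_congr rfl fun i _ => ?_
    rw [hentry i j]
    ring
  have hg : HasFDerivAt (grad h) ((phiCLM n).comp B) x := (phiCLM n).hasFDerivAt.comp x hB
  rwa [hclm] at hg


lemma simplexInt_subset (n : ℕ) : simplexInt n ⊆ simplex n :=
  fun x hx => ⟨fun i => (hx.1 i).le, hx.2⟩

lemma sum_ones (n : ℕ) : ∑ i, ones n i = (n : ℝ) := by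
  simp [ones]

lemma dot_ones {n : ℕ} (v : Fin n → ℝ) : v ⬝ᵥ ones n = ∑ i, v i := by
  simp [dotProduct, ones]

lemma strict_mono_grad (hU : IsOpen U) (hUsub : simplexInt n ⊆ U)
    (hs : ContDiffOn ℝ (⊤:ℕ∞) h U)
    (hpos : ∀ x ∈ simplexInt n, ∀ v : Fin n → ℝ, v ≠ 0 → 0 < v ⬝ᵥ (hess h x *ᵥ v))
    {x x' : Fin n → ℝ} (hx : x ∈ simplexInt n) (hx' : x' ∈ simplexInt n) (hne : x ≠ x') :
    0 < (grad h x - grad h x') ⬝ᵥ (x - x') := by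
  set v : Fin n → ℝ := x - x' with hv
  have hvne : v ≠ 0 := sub_ne_zero.2 hne
  set γ : ℝ → (Fin n → ℝ) := fun t => x' + t • v with hγ
  have hmem : ∀ t ∈ Set.Icc (0:ℝ) 1, γ t ∈ simplexInt n := by
    rintro t ⟨ht0, ht1⟩
    constructor
    · intro i
      have h1 := hx.1 i; have h2 := hx'.1 i
      have : γ t i = x' i + t * (x i - x' i) := by simp [hγ, hv]
      rw [this]
      rcases eq_or_lt_of_le ht0 with rfl | htpos
      · simpa using h2
      · nlinarith [mul_pos htpos h1, mul_nonneg (sub_nonneg.2 ht1) h2.le]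
    · have : ∑ i, γ t i = (∑ i, x' i) + t * ((∑ i, x i) - ∑ i, x' i) := by
        simp only [hγ, hv, Pi.add_apply, Pi.smul_apply, Pi.sub_apply, smul_eq_mul]
        rw [Finset.sum_add_distrib, ← Finset.mul_sum, Finset.sum_sub_distrib]
      rw [this, hx.2, hx'.2]; ring
  have hγd : ∀ t : ℝ, HasDerivAt γ v t := by
    intro t
    simpa [hγ] using ((hasDerivAt_id t).smul_const v).const_add x'
  set φ : ℝ → ℝ := fun t => dotCLM v (grad h (γ t)) with hφ
  set φ' : ℝ → ℝ := fun t => dotCLM v (hessCLM h (γ t) v) with hφ'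
  have hφd : ∀ t ∈ Set.Icc (0:ℝ) 1, HasDerivAt φ (φ' t) t := by
    intro t ht
    have h1 : HasDerivAt (fun t => grad h (γ t)) (hessCLM h (γ t) v) t := by
      have := (hasFDerivAt_grad hU hs (hUsub (hmem t ht))).comp_hasDerivAt t (hγd t)
      simpa only [Function.comp_def] using this
    have := (dotCLM v).hasFDerivAt.comp_hasDerivAt t h1
    simpa only [Function.comp_def] using this
  have hφpos : ∀ t ∈ Set.Icc (0:ℝ) 1, 0 < φ' t := by
    intro t ht
    have := hpos (γ t) (hmem t ht) v hvne
    have heq : φ' t = v ⬝ᵥ (hess h (γ t) *ᵥ v) := by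
      simp only [hφ', dotCLM_apply, hessCLM_apply]
      rw [dotProduct_mulVec, dotProduct_comm]
    rw [heq]; exact this
  have hcont : ContinuousOn φ (Set.Icc 0 1) :=
    fun t ht => (hφd t ht).continuousAt.continuousWithinAt
  obtain ⟨c, hc, hceq⟩ := exists_hasDerivAt_eq_slope φ φ' one_pos hcont
    (fun t ht => hφd t ⟨ht.1.le, ht.2.le⟩)
  have hpos' : 0 < φ' c := hφpos c ⟨hc.1.le, hc.2.le⟩
  have : φ 1 - φ 0 > 0 := by
    rw [hceq] at hpos'
    simpa using hpos'
  have hγ1 : γ 1 = x := by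
    funext i; simp [hγ, hv]
  have hγ0 : γ 0 = x' := by
    funext i; simp [hγ, hv]
  have : dotCLM v (grad h x) - dotCLM v (grad h x') > 0 := by
    rw [← hγ1, ← hγ0]; exact this
  simp only [dotCLM_apply] at this
  rw [sub_dotProduct, dotProduct_comm (grad h x), dotProduct_comm (grad h x')]
  exact this

lemma max_at (hU : IsOpen U) (hUsub : simplexInt n ⊆ U)
    (hs : ContDiffOn ℝ (⊤:ℕ∞) h U) (hconv : ConvexOn ℝ (simplex n) h)
    {x0 : Fin n → ℝ} {c : ℝ} {y : Fin n → ℝ}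
    (hx0 : x0 ∈ simplexInt n) (hy : y = grad h x0 + c • ones n) :
    ∀ x ∈ simplex n, x ⬝ᵥ y - h x ≤ x0 ⬝ᵥ y - h x0 := by
  intro x hx
  set v : Fin n → ℝ := x - x0 with hv
  have hx0' : x0 ∈ simplex n := simplexInt_subset n hx0
  set g : ℝ → ℝ := fun t => h (x0 + t • v) with hg
  have hkey : grad h x0 ⬝ᵥ v ≤ h x - h x0 := by
    have hγd : HasDerivAt (fun t : ℝ => x0 + t • v) v 0 := by
      simpa using ((hasDerivAt_id (0:ℝ)).smul_const v).const_add x0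
    have hγ0 : x0 + (0:ℝ) • v = x0 := by simp
    have hdiff : DifferentiableAt ℝ h x0 :=
      (hs.contDiffAt (hU.mem_nhds (hUsub hx0))).differentiableAt (by simp)
    have hf : HasFDerivAt h (fderiv ℝ h x0) (x0 + (0:ℝ) • v) := by
      rw [hγ0]; exact hdiff.hasFDerivAt
    have hder : HasDerivAt g (fderiv ℝ h x0 v) 0 := by
      have := hf.comp_hasDerivAt 0 hγd
      simpa [Function.comp_def, hg] using this
    have hslope : ∀ t ∈ Set.Ioc (0:ℝ) 1, slope g 0 t ≤ h x - h x0 := by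
      rintro t ⟨ht0, ht1⟩
      have hcomb : x0 + t • v = (1 - t) • x0 + t • x := by
        funext i
        simp only [hv, Pi.add_apply, Pi.smul_apply, Pi.sub_apply, smul_eq_mul]
        ring
      have := hconv.2 hx0' hx (by linarith : (0:ℝ) ≤ 1 - t) ht0.le (by ring)
      rw [← hcomb] at this
      have hg0 : g 0 = h x0 := by simp [hg]
      have hgt : g t ≤ (1 - t) * h x0 + t * h x := this
      rw [slope_def_field, sub_zero, div_le_iff₀ ht0]
      simp only [hg0]
      nlinarith
    have htend : Filter.Tendsto (slope g 0) (nhdsWithin 0 (Set.Ioi 0)) (nhds (fderiv ℝ h x0 v)) := by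
      have := hasDerivAt_iff_tendsto_slope.1 hder
      exact this.mono_left (nhdsWithin_mono 0 (fun t ht => ne_of_gt ht))
    have : fderiv ℝ h x0 v ≤ h x - h x0 := by
      refine le_of_tendsto htend ?_
      filter_upwards [Ioc_mem_nhdsGT one_pos] with t ht
      exact hslope t ht
    rwa [fderiv_eq_grad_dot] at this
  have hsum : ∑ i, v i = 0 := by
    simp only [hv, Pi.sub_apply]
    rw [Finset.sum_sub_distrib, hx.2, hx0.2]; ring
  have hA : x ⬝ᵥ y - x0 ⬝ᵥ y = grad h x0 ⬝ᵥ v := by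
    rw [← sub_dotProduct, hy, dotProduct_add, dotProduct_smul, dot_ones]
    show (x - x0) ⬝ᵥ grad h x0 + c * (∑ i, (x - x0) i) = grad h x0 ⬝ᵥ v
    rw [show ∑ i, (x - x0) i = 0 from hsum, dotProduct_comm]
    simp [hv]
  linarith


lemma exists_shift (hU : IsOpen U) (hUsub : simplexInt n ⊆ U)
    (hs : ContDiffOn ℝ (⊤:ℕ∞) h U) (hn0 : (n:ℝ) ≠ 0)
    {m y : Fin n → ℝ} (hm : m ∈ simplexInt n)
    (hmax : ∀ x ∈ simplex n, x ⬝ᵥ y - h x ≤ m ⬝ᵥ y - h m) :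
    ∃ c' : ℝ, grad h m + c' • ones n = y := by
  have hperp : ∀ v : Fin n → ℝ, (∑ i, v i) = 0 → y ⬝ᵥ v - grad h m ⬝ᵥ v = 0 := by
    intro v hvsum
    set ψ : ℝ → ℝ := fun t => dotCLM y (m + t • v) - h (m + t • v) with hψ
    have hγd : ∀ t : ℝ, HasDerivAt (fun t : ℝ => m + t • v) v t := by
      intro t; simpa using ((hasDerivAt_id t).smul_const v).const_add m
    have hγ0 : m + (0:ℝ) • v = m := by simp
    -- local max at 0
    have hS : {t : ℝ | ∀ i, 0 < (m + t • v) i} ∈ nhds (0:ℝ) := by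
      have hopen : IsOpen {t : ℝ | ∀ i, 0 < (m + t • v) i} := by
        have : {t : ℝ | ∀ i, 0 < (m + t • v) i} = ⋂ i, {t : ℝ | 0 < m i + t * v i} := by
          ext t; simp
        rw [this]
        exact isOpen_iInter_of_finite fun i =>
          isOpen_lt continuous_const (continuous_const.add (continuous_id.mul continuous_const))
      exact hopen.mem_nhds (by simp [hm.1])
    have hloc : IsLocalMax ψ 0 := by
      filter_upwards [hS] with t ht
      have hmemt : m + t • v ∈ simplex n := by
        constructor
        · exact fun i => (ht i).le
        · have : ∑ i, (m + t • v) i = (∑ i, m i) + t * ∑ i, v i := by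
            simp only [Pi.add_apply, Pi.smul_apply, smul_eq_mul]
            rw [Finset.sum_add_distrib, ← Finset.mul_sum]
          rw [this, hm.2, hvsum]; ring
      have := hmax (m + t • v) hmemt
      have hψt : ψ t = (m + t • v) ⬝ᵥ y - h (m + t • v) := by
        simp [hψ, dotProduct_comm]
      have hψ0 : ψ 0 = m ⬝ᵥ y - h m := by
        simp [hψ, hγ0, dotProduct_comm]
      rw [hψt, hψ0]; exact this
    have hdiff : DifferentiableAt ℝ h m :=
      (hs.contDiffAt (hU.mem_nhds (hUsub hm))).differentiableAt (by simp)
    have hf : HasFDerivAt h (fderiv ℝ h m) (m + (0:ℝ) • v) := by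
      rw [hγ0]; exact hdiff.hasFDerivAt
    have hder : HasDerivAt ψ (dotCLM y v - fderiv ℝ h m v) 0 := by
      have h1 : HasDerivAt (fun t : ℝ => dotCLM y (m + t • v)) (dotCLM y v) 0 := by
        have := (dotCLM y).hasFDerivAt.comp_hasDerivAt 0 (hγd 0)
        simpa only [Function.comp_def] using this
      have h2 : HasDerivAt (fun t : ℝ => h (m + t • v)) (fderiv ℝ h m v) 0 := by
        have := hf.comp_hasDerivAt 0 (hγd 0)
        simpa only [Function.comp_def] using this
      exact h1.sub h2
    have hzero : dotCLM y v - fderiv ℝ h m v = 0 := hloc.hasDerivAt_eq_zero hder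
    rw [fderiv_eq_grad_dot] at hzero
    simpa using hzero
  set w : Fin n → ℝ := y - grad h m with hw
  set s : ℝ := (∑ i, w i) / n with hsdef
  set v : Fin n → ℝ := w - s • ones n with hvdef
  have hvsum : ∑ i, v i = 0 := by
    simp only [hvdef, Pi.sub_apply, Pi.smul_apply, ones, smul_eq_mul, mul_one]
    rw [Finset.sum_sub_distrib, Finset.sum_const, Finset.card_univ, Fintype.card_fin]
    simp only [hsdef, nsmul_eq_mul]
    field_simp [hsdef]
    ring
  have h1 : w ⬝ᵥ v = 0 := by
    have := hperp v hvsum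
    rw [← sub_dotProduct] at this
    exact this
  have h2 : v ⬝ᵥ v = 0 := by
    have : v ⬝ᵥ v = w ⬝ᵥ v - s * (ones n ⬝ᵥ v) := by
      rw [show v ⬝ᵥ v = (w - s • ones n) ⬝ᵥ v from rfl, sub_dotProduct, smul_dotProduct]
      simp
    rw [this, h1, dotProduct_comm, dot_ones, hvsum]
    ring
  have hv0 : v = 0 := dotProduct_self_eq_zero.1 h2
  refine ⟨s, ?_⟩
  have hws : w = s • ones n := by
    have := sub_eq_zero.1 hv0
    exact this
  rw [← hws, hw]
  abel

lemma unique_max (hU : IsOpen U) (hUsub : simplexInt n ⊆ U)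
    (hs : ContDiffOn ℝ (⊤:ℕ∞) h U) (hconv : ConvexOn ℝ (simplex n) h)
    (hpos : ∀ x ∈ simplexInt n, ∀ v : Fin n → ℝ, v ≠ 0 → 0 < v ⬝ᵥ (hess h x *ᵥ v))
    (hn0 : (n:ℝ) ≠ 0)
    {x0 : Fin n → ℝ} {c : ℝ} {y : Fin n → ℝ}
    (hx0 : x0 ∈ simplexInt n) (hy : y = grad h x0 + c • ones n)
    {x1 : Fin n → ℝ} (hx1 : x1 ∈ simplex n)
    (hmax1 : ∀ x' ∈ simplex n, x' ⬝ᵥ y - h x' ≤ x1 ⬝ᵥ y - h x1) :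
    x1 = x0 := by
  have hx0' : x0 ∈ simplex n := simplexInt_subset n hx0
  set m : Fin n → ℝ := (2:ℝ)⁻¹ • x0 + (2:ℝ)⁻¹ • x1 with hmdef
  have hm : m ∈ simplexInt n := by
    constructor
    · intro i
      have := hx0.1 i; have := hx1.1 i
      simp only [hmdef, Pi.add_apply, Pi.smul_apply, smul_eq_mul]
      nlinarith
    · have : ∑ i, m i = (2:ℝ)⁻¹ * (∑ i, x0 i) + (2:ℝ)⁻¹ * ∑ i, x1 i := by
        simp only [hmdef, Pi.add_apply, Pi.smul_apply, smul_eq_mul]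
        rw [Finset.sum_add_distrib, ← Finset.mul_sum, ← Finset.mul_sum]
      rw [this, hx0.2, hx1.2]; norm_num
  have hL3 := max_at hU hUsub hs hconv hx0 hy
  have hfx1 : x1 ⬝ᵥ y - h x1 = x0 ⬝ᵥ y - h x0 :=
    le_antisymm (hL3 x1 hx1) (hmax1 x0 hx0')
  have hhm : h m ≤ (2:ℝ)⁻¹ * h x0 + (2:ℝ)⁻¹ * h x1 := by
    have := hconv.2 hx0' hx1 (by norm_num : (0:ℝ) ≤ 2⁻¹) (by norm_num : (0:ℝ) ≤ 2⁻¹)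
      (by norm_num)
    simpa [smul_eq_mul] using this
  have hmy : m ⬝ᵥ y = (2:ℝ)⁻¹ * (x0 ⬝ᵥ y) + (2:ℝ)⁻¹ * (x1 ⬝ᵥ y) := by
    rw [hmdef, add_dotProduct, smul_dotProduct, smul_dotProduct]
    simp
  have hmmax : ∀ x ∈ simplex n, x ⬝ᵥ y - h x ≤ m ⬝ᵥ y - h m := by
    intro x hx
    have h1 := hL3 x hx
    linarith
  obtain ⟨c', hc'⟩ := exists_shift hU hUsub hs hn0 hm hmmax
  by_cases hme : m = x0
  · funext i
    have := congrFun hme i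
    simp only [hmdef, Pi.add_apply, Pi.smul_apply, smul_eq_mul] at this
    linarith
  · exfalso
    have hstrict := strict_mono_grad hU hUsub hs hpos hm hx0 hme
    have hgm : grad h m = y - c' • ones n := by
      rw [← hc']; abel
    have hgx0 : grad h x0 = y - c • ones n := by
      rw [hy]; abel
    have hdiff : grad h m - grad h x0 = (c - c') • ones n := by
      rw [hgm, hgx0]
      funext i
      simp only [Pi.sub_apply, Pi.smul_apply, ones, smul_eq_mul, mul_one]
      ring
    rw [hdiff, smul_dotProduct] at hstrict
    have hsum : ones n ⬝ᵥ (m - x0) = 0 := by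
      rw [dotProduct_comm, dot_ones]
      simp only [Pi.sub_apply]
      rw [Finset.sum_sub_distrib, hm.2, hx0.2]; ring
    rw [hsum] at hstrict
    simp at hstrict


/-- scaled rank-one map `z ↦ (n⁻¹ ∑ z) • 𝟙` -/
def Sc (n : ℕ) : (Fin n → ℝ) →L[ℝ] (Fin n → ℝ) :=
  (((n:ℝ)⁻¹ • sumCLM n : (Fin n → ℝ) →L[ℝ] ℝ)).smulRight (ones n)

@[simp] lemma Sc_apply {n : ℕ} (z : Fin n → ℝ) :
    Sc n z = ((n:ℝ)⁻¹ * ∑ i, z i) • ones n := by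
  simp [Sc, ContinuousLinearMap.smulRight_apply]

/-- linear part of the affine projection onto the hyperplane -/
def Pc (n : ℕ) : (Fin n → ℝ) →L[ℝ] (Fin n → ℝ) :=
  ContinuousLinearMap.id ℝ (Fin n → ℝ) - Sc n

@[simp] lemma Pc_apply {n : ℕ} (z : Fin n → ℝ) :
    Pc n z = z - ((n:ℝ)⁻¹ * ∑ i, z i) • ones n := by
  simp [Pc]

/-- affine projection onto the hyperplane `{∑ = 1}` -/
def Tm (n : ℕ) : (Fin n → ℝ) → (Fin n → ℝ) :=
  fun z => Pc n z + (n:ℝ)⁻¹ • ones n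

lemma Tm_apply {n : ℕ} (z : Fin n → ℝ) (i : Fin n) :
    Tm n z i = z i - (n:ℝ)⁻¹ * (∑ j, z j) + (n:ℝ)⁻¹ := by
  simp [Tm, ones]

lemma Tm_contDiff (n : ℕ) : ContDiff ℝ (⊤:ℕ∞) (Tm n) :=
  (Pc n).contDiff.add contDiff_const

lemma hasFDerivAt_Tm {n : ℕ} (z : Fin n → ℝ) : HasFDerivAt (Tm n) (Pc n) z :=
  (Pc n).hasFDerivAt.add_const _

lemma Tm_sum {n : ℕ} (hn0 : (n:ℝ) ≠ 0) (z : Fin n → ℝ) : ∑ i, Tm n z i = 1 := by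
  simp only [Tm_apply]
  rw [Finset.sum_add_distrib, Finset.sum_sub_distrib, Finset.sum_const, Finset.sum_const,
    Finset.card_univ, Fintype.card_fin]
  simp only [nsmul_eq_mul]
  field_simp
  ring

lemma sum_add_smul_ones {n : ℕ} (x : Fin n → ℝ) (c : ℝ) :
    ∑ i, (x + c • ones n) i = (∑ i, x i) + c * n := by
  simp only [Pi.add_apply, Pi.smul_apply, ones, smul_eq_mul, mul_one]
  rw [Finset.sum_add_distrib, Finset.sum_const, Finset.card_univ, Fintype.card_fin]
  ring

lemma Tm_shift {n : ℕ} (hn0 : (n:ℝ) ≠ 0) {x : Fin n → ℝ} (hx : ∑ i, x i = 1) (c : ℝ) :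
    Tm n (x + c • ones n) = x := by
  funext i
  rw [Tm_apply, sum_add_smul_ones, hx]
  simp only [Pi.add_apply, Pi.smul_apply, ones, smul_eq_mul, mul_one]
  field_simp
  ring

/-- the FTRL-type map whose inverse gives the choice map -/
def Phi {n : ℕ} (h : (Fin n → ℝ) → ℝ) : (Fin n → ℝ) → (Fin n → ℝ) :=
  fun z => grad h (Tm n z) + (Sc n z - (n:ℝ)⁻¹ • ones n)

lemma Phi_eq {n : ℕ} (h : (Fin n → ℝ) → ℝ) (z : Fin n → ℝ) :
    Phi h z = grad h (Tm n z) + ((n:ℝ)⁻¹ * (∑ i, z i) - (n:ℝ)⁻¹) • ones n := by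
  simp [Phi, sub_smul]

lemma Phi_shift {n : ℕ} (h : (Fin n → ℝ) → ℝ) (hn0 : (n:ℝ) ≠ 0) {x : Fin n → ℝ}
    (hx : ∑ i, x i = 1) (c : ℝ) :
    Phi h (x + c • ones n) = grad h x + c • ones n := by
  rw [Phi_eq, Tm_shift hn0 hx, sum_add_smul_ones, hx]
  congr 1
  funext i
  simp only [Pi.smul_apply, ones, smul_eq_mul, mul_one]
  field_simp
  ring

lemma z_decomp {n : ℕ} (hn0 : (n:ℝ) ≠ 0) (z : Fin n → ℝ) :
    z = Tm n z + ((n:ℝ)⁻¹ * (∑ i, z i) - (n:ℝ)⁻¹) • ones n := by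
  funext i
  rw [Pi.add_apply, Tm_apply]
  simp only [Pi.smul_apply, ones, smul_eq_mul, mul_one]
  ring

/-- the derivative of `Phi` -/
def Aclm {n : ℕ} (h : (Fin n → ℝ) → ℝ) (z : Fin n → ℝ) :
    (Fin n → ℝ) →L[ℝ] (Fin n → ℝ) :=
  (hessCLM h (Tm n z)).comp (Pc n) + Sc n

lemma hasFDerivAt_Phi {n : ℕ} {h : (Fin n → ℝ) → ℝ} {U : Set (Fin n → ℝ)}
    (hU : IsOpen U) (hs : ContDiffOn ℝ (⊤:ℕ∞) h U) {z : Fin n → ℝ} (hTz : Tm n z ∈ U) :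
    HasFDerivAt (Phi h) (Aclm h z) z := by
  have h1 : HasFDerivAt (fun z => grad h (Tm n z)) ((hessCLM h (Tm n z)).comp (Pc n)) z := by
    have := (hasFDerivAt_grad hU hs hTz).comp z (hasFDerivAt_Tm z)
    simpa only [Function.comp_def] using this
  have h2 : HasFDerivAt (fun z => Sc n z - (n:ℝ)⁻¹ • ones n) (Sc n) z :=
    (Sc n).hasFDerivAt.sub_const _
  exact h1.add h2

lemma contDiffAt_Phi {n : ℕ} {h : (Fin n → ℝ) → ℝ} {U : Set (Fin n → ℝ)}
    (hU : IsOpen U) (hs : ContDiffOn ℝ (⊤:ℕ∞) h U) {z : Fin n → ℝ} (hTz : Tm n z ∈ U) :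
    ContDiffAt ℝ (⊤:ℕ∞) (Phi h) z := by
  have h1 : ContDiffAt ℝ (⊤:ℕ∞) (fun z => grad h (Tm n z)) z := by
    have hg : ContDiffAt ℝ (⊤:ℕ∞) (grad h) (Tm n z) :=
      (grad_smooth hU hs).contDiffAt (hU.mem_nhds hTz)
    exact hg.comp z (Tm_contDiff n).contDiffAt
  have h2 : ContDiffAt ℝ (⊤:ℕ∞) (fun z => Sc n z - (n:ℝ)⁻¹ • ones n) z :=
    ((Sc n).contDiff.sub contDiff_const).contDiffAt
  exact h1.add h2

lemma Aclm_ker {n : ℕ} {h : (Fin n → ℝ) → ℝ}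
    (hpos : ∀ x ∈ simplexInt n, ∀ v : Fin n → ℝ, v ≠ 0 → 0 < v ⬝ᵥ (hess h x *ᵥ v))
    (hn0 : (n:ℝ) ≠ 0) (i0 : Fin n) {z : Fin n → ℝ} (hTz : Tm n z ∈ simplexInt n)
    {v : Fin n → ℝ} (hv : Aclm h z v = 0) : v = 0 := by
  set w : Fin n → ℝ := Pc n v with hw
  set s : ℝ := (n:ℝ)⁻¹ * ∑ i, v i with hs
  have hav : (w ᵥ* hess h (Tm n z)) + s • ones n = 0 := by
    have : Aclm h z v = (w ᵥ* hess h (Tm n z)) + s • ones n := by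
      simp [Aclm, hw, hs]
    rw [← this]; exact hv
  have hwsum : ∑ i, w i = 0 := by
    simp only [hw, Pc_apply, Pi.sub_apply, Pi.smul_apply, ones, smul_eq_mul, mul_one]
    rw [Finset.sum_sub_distrib, Finset.sum_const, Finset.card_univ, Fintype.card_fin]
    simp only [nsmul_eq_mul]
    field_simp
    ring
  have hdot : (w ᵥ* hess h (Tm n z)) ⬝ᵥ w + s * (ones n ⬝ᵥ w) = 0 := by
    have := congrArg (fun u => u ⬝ᵥ w) hav
    simpa [add_dotProduct, smul_dotProduct] using this
  have hones : ones n ⬝ᵥ w = 0 := by rw [dotProduct_comm, dot_ones]; exact hwsum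
  rw [hones, mul_zero, add_zero] at hdot
  have hw0 : w = 0 := by
    by_contra hne
    have := hpos (Tm n z) hTz w hne
    rw [dotProduct_mulVec] at this
    linarith
  rw [hw0] at hav
  have hs0 : s = 0 := by
    have := congrFun hav i0
    simpa [ones] using this
  have : v = w + s • ones n := by
    funext i
    simp only [hw, Pc_apply, Pi.add_apply, Pi.sub_apply, Pi.smul_apply, ones,
      smul_eq_mul, mul_one, hs]
    ring
  rw [this, hw0, hs0]
  simp


/-- domain of the parametrization -/
def Dset (n : ℕ) : Set (Fin n → ℝ) := {z | ∀ i, 0 < Tm n z i}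

lemma Dset_open (n : ℕ) : IsOpen (Dset n) := by
  have : Dset n = ⋂ i, (fun z => Tm n z i) ⁻¹' Set.Ioi 0 := by
    ext z; simp [Dset]
  rw [this]
  exact isOpen_iInter_of_finite fun i =>
    isOpen_Ioi.preimage ((continuous_apply i).comp (Tm_contDiff n).continuous)

lemma Tm_mem {n : ℕ} (hn0 : (n:ℝ) ≠ 0) {z : Fin n → ℝ} (hz : z ∈ Dset n) :
    Tm n z ∈ simplexInt n := ⟨hz, Tm_sum hn0 z⟩

lemma shift_mem_Dset {n : ℕ} (hn0 : (n:ℝ) ≠ 0) {x : Fin n → ℝ} (hx : x ∈ simplexInt n)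
    (c : ℝ) : x + c • ones n ∈ Dset n := by
  intro i
  rw [Tm_shift hn0 hx.2]
  exact hx.1 i

lemma injOn_Phi {n : ℕ} {h : (Fin n → ℝ) → ℝ} {U : Set (Fin n → ℝ)}
    (hU : IsOpen U) (hUsub : simplexInt n ⊆ U) (hs : ContDiffOn ℝ (⊤:ℕ∞) h U)
    (hpos : ∀ x ∈ simplexInt n, ∀ v : Fin n → ℝ, v ≠ 0 → 0 < v ⬝ᵥ (hess h x *ᵥ v))
    (hn0 : (n:ℝ) ≠ 0) (i0 : Fin n) :
    Set.InjOn (Phi h) (Dset n) := by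
  intro z hz z' hz' heq
  rw [Phi_eq, Phi_eq] at heq
  have hTT : Tm n z = Tm n z' := by
    by_contra hne
    have hstrict := strict_mono_grad hU hUsub hs hpos (Tm_mem hn0 hz) (Tm_mem hn0 hz') hne
    have hgd : grad h (Tm n z) - grad h (Tm n z')
        = (((n:ℝ)⁻¹ * (∑ i, z' i) - (n:ℝ)⁻¹) - ((n:ℝ)⁻¹ * (∑ i, z i) - (n:ℝ)⁻¹)) • ones n := by
      funext i
      have := congrFun heq i
      simp only [Pi.add_apply, Pi.smul_apply, ones, smul_eq_mul, mul_one, Pi.sub_apply] at this ⊢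
      linarith
    rw [hgd, smul_dotProduct] at hstrict
    have hzero : ones n ⬝ᵥ (Tm n z - Tm n z') = 0 := by
      rw [dotProduct_comm, dot_ones]
      simp only [Pi.sub_apply]
      rw [Finset.sum_sub_distrib, Tm_sum hn0, Tm_sum hn0]; ring
    rw [hzero] at hstrict
    simp at hstrict
  rw [hTT] at heq
  have haa : (n:ℝ)⁻¹ * (∑ i, z i) - (n:ℝ)⁻¹ = (n:ℝ)⁻¹ * (∑ i, z' i) - (n:ℝ)⁻¹ := by
    have := congrFun (add_left_cancel heq) i0
    simpa [ones] using this
  calc z = Tm n z + ((n:ℝ)⁻¹ * (∑ i, z i) - (n:ℝ)⁻¹) • ones n := z_decomp hn0 z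
    _ = Tm n z' + ((n:ℝ)⁻¹ * (∑ i, z' i) - (n:ℝ)⁻¹) • ones n := by rw [hTT, haa]
    _ = z' := (z_decomp hn0 z').symm

end Stmt5Aux

open Stmt5Aux

/-- (Smoothness part of Lemma 2 of the paper.) For `h` continuous and
convex on the simplex, `C^∞` on an open set containing `Δ_n°` with positive definite
Hessian there, the set `W = ∇h(Δ_n°) + span{𝟙}` is open, and there is a `C^∞` map
`q : W → ℝ^n` such that for every `y ∈ W`, `q y` lies in `Δ_n°` and is the unique
maximizer of `x ↦ ⟨x, y⟩ - h x` over `Δ_n`. -/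
theorem stmt5 {n : ℕ} (hn : 2 ≤ n) (h : (Fin n → ℝ) → ℝ)
    (hcont : ContinuousOn h (simplex n)) (hconv : ConvexOn ℝ (simplex n) h)
    (U : Set (Fin n → ℝ)) (hU : IsOpen U) (hUsub : simplexInt n ⊆ U)
    (hsmooth : ContDiffOn ℝ (⊤ : ℕ∞) h U)
    (hpos : ∀ x ∈ simplexInt n, ∀ v : Fin n → ℝ, v ≠ 0 → 0 < v ⬝ᵥ (hess h x *ᵥ v)) :
    IsOpen {y : Fin n → ℝ | ∃ x ∈ simplexInt n, ∃ c : ℝ, y = grad h x + c • ones n} ∧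
    ∃ q : (Fin n → ℝ) → (Fin n → ℝ),
      ContDiffOn ℝ (⊤ : ℕ∞) q
        {y : Fin n → ℝ | ∃ x ∈ simplexInt n, ∃ c : ℝ, y = grad h x + c • ones n} ∧
      ∀ y ∈ {y : Fin n → ℝ | ∃ x ∈ simplexInt n, ∃ c : ℝ, y = grad h x + c • ones n},
        q y ∈ simplexInt n ∧
        (∀ x ∈ simplex n, x ⬝ᵥ y - h x ≤ (q y) ⬝ᵥ y - h (q y)) ∧
        (∀ x ∈ simplex n, (∀ x' ∈ simplex n, x' ⬝ᵥ y - h x' ≤ x ⬝ᵥ y - h x) → x = q y) := by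
  classical
  have hn0 : (n:ℝ) ≠ 0 := Nat.cast_ne_zero.mpr (by omega)
  let i0 : Fin n := ⟨0, by omega⟩
  have hDo : IsOpen (Dset n) := Dset_open n
  have hTmem : ∀ z ∈ Dset n, Tm n z ∈ simplexInt n := fun z hz => Tm_mem hn0 hz
  have hWim : {y : Fin n → ℝ | ∃ x ∈ simplexInt n, ∃ c : ℝ, y = grad h x + c • ones n}
      = Phi h '' Dset n := by
    ext y
    constructor
    · rintro ⟨x, hx, c, rfl⟩
      exact ⟨x + c • ones n, shift_mem_Dset hn0 hx c, Phi_shift h hn0 hx.2 c⟩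
    · rintro ⟨z, hz, rfl⟩
      exact ⟨Tm n z, hTmem z hz, (n:ℝ)⁻¹ * (∑ i, z i) - (n:ℝ)⁻¹, Phi_eq h z⟩
  have hinjD : Set.InjOn (Phi h) (Dset n) := injOn_Phi hU hUsub hsmooth hpos hn0 i0
  -- invertible derivative at each point of Dset
  have hEquiv : ∀ z ∈ Dset n, ∃ e : (Fin n → ℝ) ≃L[ℝ] (Fin n → ℝ),
      (e : (Fin n → ℝ) →L[ℝ] (Fin n → ℝ)) = Aclm h z := by
    intro z hz
    have hinj : Function.Injective (Aclm h z) := by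
      intro a b hab
      have h0 : Aclm h z (a - b) = 0 := by rw [map_sub, hab, sub_self]
      have := Aclm_ker hpos hn0 i0 (hTmem z hz) h0
      exact sub_eq_zero.mp this
    have hsurj : Function.Surjective (Aclm h z) := by
      have hinj' : Function.Injective ((Aclm h z : (Fin n → ℝ) →ₗ[ℝ] (Fin n → ℝ))) := hinj
      exact LinearMap.injective_iff_surjective.mp hinj'
    exact ⟨LinearEquiv.toContinuousLinearEquiv
        (LinearEquiv.ofBijective ((Aclm h z : (Fin n → ℝ) →ₗ[ℝ] (Fin n → ℝ))) ⟨hinj, hsurj⟩),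
      ContinuousLinearMap.ext fun v => rfl⟩
  choose! e he using hEquiv
  have hfdAt : ∀ z, z ∈ Dset n →
      HasFDerivAt (Phi h) ((e z : (Fin n → ℝ) →L[ℝ] (Fin n → ℝ))) z := by
    intro z hz
    rw [he z hz]
    exact hasFDerivAt_Phi hU hsmooth (hUsub (hTmem z hz))
  have hstrictAt : ∀ z, z ∈ Dset n →
      HasStrictFDerivAt (Phi h) ((e z : (Fin n → ℝ) →L[ℝ] (Fin n → ℝ))) z := fun z hz =>
    (contDiffAt_Phi hU hsmooth (hUsub (hTmem z hz))).hasStrictFDerivAt' (hfdAt z hz) (by simp)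
  constructor
  · rw [isOpen_iff_mem_nhds]
    intro y hy
    rw [hWim] at hy
    obtain ⟨z, hz, rfl⟩ := hy
    rw [hWim, ← (hstrictAt z hz).map_nhds_eq_of_equiv]
    exact Filter.image_mem_map (hDo.mem_nhds hz)
  · refine ⟨fun y => Tm n (Function.invFunOn (Phi h) (Dset n) y), ?_, ?_⟩
    · -- smoothness
      intro y0 hy0
      obtain ⟨x, hx, c, rfl⟩ := hy0
      have hz0 : x + c • ones n ∈ Dset n := shift_mem_Dset hn0 hx c
      have hΦz0 : Phi h (x + c • ones n) = grad h x + c • ones n := Phi_shift h hn0 hx.2 c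
      have hca := contDiffAt_Phi hU hsmooth (hUsub (hTmem _ hz0))
      have hstrict := hstrictAt _ hz0
      set g := hstrict.localInverse (Phi h) (e (x + c • ones n)) (x + c • ones n) with hgdef
      have hgsmooth : ContDiffAt ℝ (⊤:ℕ∞) g (Phi h (x + c • ones n)) :=
        hca.to_localInverse (hfdAt _ hz0) (by simp)
      have hg0 : g (Phi h (x + c • ones n)) = x + c • ones n :=
        hstrict.localInverse_apply_image
      have hDg : Dset n ∈ nhds (g (Phi h (x + c • ones n))) := by
        rw [hg0]; exact hDo.mem_nhds hz0
      have ev2 : ∀ᶠ y in nhds (Phi h (x + c • ones n)), g y ∈ Dset n :=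
        hstrict.localInverse_continuousAt.preimage_mem_nhds hDg
      have ev1 : ∀ᶠ y in nhds (Phi h (x + c • ones n)), Phi h (g y) = y :=
        hstrict.eventually_right_inverse
      have hqeq : (fun y => Tm n (Function.invFunOn (Phi h) (Dset n) y))
          =ᶠ[nhds (Phi h (x + c • ones n))] fun y => Tm n (g y) := by
        filter_upwards [ev1, ev2] with y h1 h2
        have hex : ∃ a ∈ Dset n, Phi h a = y := ⟨g y, h2, h1⟩
        have := hinjD (Function.invFunOn_mem hex) h2
          ((Function.invFunOn_eq hex).trans h1.symm)
        simp only [this]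
      have hTg : ContDiffAt ℝ (⊤:ℕ∞) (fun y => Tm n (g y)) (Phi h (x + c • ones n)) :=
        (Tm_contDiff n).contDiffAt.comp _ hgsmooth
      have hfinal := hTg.congr_of_eventuallyEq hqeq
      rw [hΦz0] at hfinal
      exact hfinal.contDiffWithinAt
    · -- pointwise properties
      intro y hy
      obtain ⟨x, hx, c, rfl⟩ := hy
      have hz : x + c • ones n ∈ Dset n := shift_mem_Dset hn0 hx c
      have hΦz : Phi h (x + c • ones n) = grad h x + c • ones n := Phi_shift h hn0 hx.2 c
      have hex : ∃ a ∈ Dset n, Phi h a = grad h x + c • ones n := ⟨_, hz, hΦz⟩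
      have hqy : Tm n (Function.invFunOn (Phi h) (Dset n) (grad h x + c • ones n)) = x := by
        have h3 : Function.invFunOn (Phi h) (Dset n) (grad h x + c • ones n)
            = x + c • ones n :=
          hinjD (Function.invFunOn_mem hex) hz ((Function.invFunOn_eq hex).trans hΦz.symm)
        rw [h3, Tm_shift hn0 hx.2]
      beta_reduce
      rw [hqy]
      refine ⟨hx, max_at hU hUsub hsmooth hconv hx rfl, ?_⟩
      intro x1 hx1 hmax1
      exact unique_max hU hUsub hsmooth hconv hpos hn0 hx rfl hx1 hmax1
end
end

section
/- Let n ≥ 2, let h : ℝ^n → ℝ be twice continuously differentiable on an open set containing Δ_n° with Hessian positive definite on Δ_n°, and let M := {P_H ∇h(x) : x ∈ Δ_n°}. Let A ∈ ℝ^{n×m} and suppose rank(P_H A) < n − 1. Then for every z₀ ∈ M there exists z₁ ∈ M such that for no T ≥ 0 and no integrable control u : [0,T] → Δ_m does z₀ + ∫₀ᵀ P_H A u(s) ds = z₁; in particular the system ż = P_H A u on M is not controllable. -/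
open Matrix MeasureTheory

noncomputable section

lemma exists_c {n m : ℕ} (hn : 2 ≤ n) (B : Matrix (Fin n) (Fin m) ℝ) (hrank : B.rank < n - 1) :
    ∃ c : Fin n → ℝ, c ≠ 0 ∧ (∑ i, c i) = 0 ∧ Bᵀ *ᵥ c = 0 := by
  classical
  set K := LinearMap.ker (Bᵀ).mulVecLin with hKdef
  set l : (Fin n → ℝ) →ₗ[ℝ] ℝ := ∑ i, LinearMap.proj i with hldef
  set S := LinearMap.ker l with hSdef
  have hfin : Module.finrank ℝ (Fin n → ℝ) = n := by simp
  have e1 : Bᵀ.rank + Module.finrank ℝ K = n := by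
    have := LinearMap.finrank_range_add_finrank_ker (Bᵀ).mulVecLin
    rw [hfin] at this
    exact this
  have e2 : Module.finrank ℝ (LinearMap.range l) + Module.finrank ℝ S = n := by
    have := LinearMap.finrank_range_add_finrank_ker l
    rw [hfin] at this
    exact this
  have e3 : Module.finrank ℝ (LinearMap.range l) ≤ 1 := by
    simpa using (LinearMap.range l).finrank_le
  have e4 : Module.finrank ℝ ↥(K ⊔ S) + Module.finrank ℝ ↥(K ⊓ S)
      = Module.finrank ℝ K + Module.finrank ℝ S :=
    Submodule.finrank_sup_add_finrank_inf_eq K S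
  have e5 : Module.finrank ℝ ↥(K ⊔ S) ≤ n := by
    simpa [hfin] using (K ⊔ S).finrank_le
  have hBt : Bᵀ.rank = B.rank := Matrix.rank_transpose B
  have hposrank : 0 < Module.finrank ℝ ↥(K ⊓ S) := by omega
  obtain ⟨c, hc⟩ := Module.finrank_pos_iff_exists_ne_zero.mp hposrank
  refine ⟨(c : Fin n → ℝ), by simpa using hc, ?_, ?_⟩
  · have hl : l (c : Fin n → ℝ) = 0 := c.2.2
    simpa [hldef, LinearMap.sum_apply] using hl
  · have := c.2.1
    rw [Matrix.mulVec_transpose]; simpa [hKdef, LinearMap.mem_ker] using this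

lemma dot_PH {n : ℕ} (c v : Fin n → ℝ) (hc : ∑ i, c i = 0) :
    c ⬝ᵥ (PH n *ᵥ v) = c ⬝ᵥ v := by
  have hPH : ∀ i j, PH n i j = (if i = j then (1:ℝ) else 0) - (n:ℝ)⁻¹ := by
    intro i j; simp [PH, Matrix.one_apply]
  have hmv : ∀ i, (PH n *ᵥ v) i = v i - (n:ℝ)⁻¹ * ∑ j, v j := by
    intro i
    simp [mulVec, dotProduct, hPH, sub_mul, Finset.sum_sub_distrib, ← Finset.mul_sum]
  calc c ⬝ᵥ (PH n *ᵥ v) = ∑ i, (c i * v i - c i * ((n:ℝ)⁻¹ * ∑ j, v j)) := by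
        simp [dotProduct, hmv, mul_sub]
    _ = c ⬝ᵥ v - (∑ i, c i) * ((n:ℝ)⁻¹ * ∑ j, v j) := by
        rw [Finset.sum_sub_distrib, Finset.sum_mul]; rfl
    _ = c ⬝ᵥ v := by rw [hc]; ring

lemma single_sum {n : ℕ} (c : Fin n → ℝ) : ∑ i, c i • (Pi.single i 1 : Fin n → ℝ) = c := by
  ext j
  simp [Pi.single_apply, Finset.sum_ite_eq]

lemma dot_grad {n : ℕ} (h : (Fin n → ℝ) → ℝ) (x : Fin n → ℝ) (c : Fin n → ℝ) :
    c ⬝ᵥ grad h x = fderiv ℝ h x c := by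
  conv_rhs => rw [← single_sum c]
  rw [map_sum]
  simp [grad, dotProduct]

lemma snd_deriv {n : ℕ} (h : (Fin n → ℝ) → ℝ) (y : Fin n → ℝ)
    (hd : DifferentiableAt ℝ (fderiv ℝ h) y) (c : Fin n → ℝ) :
    (fderiv ℝ (fderiv ℝ h) y c) c = c ⬝ᵥ (hess h y *ᵥ c) := by
  set L := fderiv ℝ (fderiv ℝ h) y with hL
  have hij : ∀ i j, hess h y i j = (L (Pi.single i 1)) (Pi.single j 1) := by
    intro i j
    have := fderiv_clm_apply (x := y) hd (differentiableAt_const (Pi.single j (1:ℝ) : Fin n → ℝ))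
    simp only [hess, Matrix.of_apply]
    rw [show (fun z => fderiv ℝ h z (Pi.single j 1)) = fun z => (fderiv ℝ h z) (Pi.single j 1) from rfl, this]
    simp [hL]
  have s1 : L c = ∑ i, c i • L (Pi.single i 1) := by
    conv_lhs => rw [← single_sum c]
    simp
  have s2 : (L c) c = ∑ i, c i * (L (Pi.single i 1)) c := by
    rw [s1]
    simp
  have s3 : ∀ i, (L (Pi.single i 1)) c = ∑ j, c j * (L (Pi.single i 1)) (Pi.single j 1) := by
    intro i
    conv_lhs => rw [← single_sum c]
    simp
  rw [s2]
  simp only [s3, dotProduct, mulVec, hij]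
  refine Finset.sum_congr rfl fun i _ => ?_
  rw [Finset.mul_sum, Finset.mul_sum]
  exact Finset.sum_congr rfl fun j _ => by ring

/-- (Necessity of the rank condition in Theorem 1 of the paper.) If
`rank(P_H A) < n - 1`, then from every `z₀ ∈ M` some `z₁ ∈ M` is unreachable: for no
time horizon `T ≥ 0` and no integrable simplex-valued control `u` does
`z₀ + ∫₀ᵀ P_H A u(s) ds = z₁`. In particular `ż = P_H A u` is not controllable on `M`. -/
theorem stmt7 {n m : ℕ} (hn : 2 ≤ n) (h : (Fin n → ℝ) → ℝ)
    (U : Set (Fin n → ℝ)) (hU : IsOpen U) (hUsub : simplexInt n ⊆ U)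
    (hC2 : ContDiffOn ℝ 2 h U)
    (hpos : ∀ x ∈ simplexInt n, ∀ v : Fin n → ℝ, v ≠ 0 → 0 < v ⬝ᵥ (hess h x *ᵥ v))
    (A : Matrix (Fin n) (Fin m) ℝ) (hrank : (PH n * A).rank < n - 1) :
    ∀ z₀ ∈ (fun x => PH n *ᵥ grad h x) '' simplexInt n,
      ∃ z₁ ∈ (fun x => PH n *ᵥ grad h x) '' simplexInt n,
        ∀ T : ℝ, 0 ≤ T → ∀ u : ℝ → Fin m → ℝ,
          IntervalIntegrable u volume 0 T →
          (∀ s ∈ Set.Icc (0 : ℝ) T, u s ∈ simplex m) →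
          z₀ + (∫ s in (0:ℝ)..T, PH n *ᵥ (A *ᵥ u s)) ≠ z₁ := by
  have hn0 : (0:ℕ) < n := by omega
  rintro z₀ ⟨x₀, hx₀, rfl⟩
  obtain ⟨c, hc0, hcsum, hcK⟩ := exists_c hn (PH n * A) hrank
  have hF1 : ContDiffOn ℝ 1 (fderiv ℝ h) U := hC2.fderiv_of_isOpen hU (by norm_num)
  have hFd : ∀ y ∈ U, DifferentiableAt ℝ (fderiv ℝ h) y := fun y hy =>
    ((hF1.differentiableOn one_ne_zero) y hy).differentiableAt (hU.mem_nhds hy)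
  obtain ⟨i₀, -, hmin⟩ := Finset.exists_min_image Finset.univ x₀ ⟨⟨0, hn0⟩, Finset.mem_univ _⟩
  set ε := x₀ i₀ with hε
  have hεpos : 0 < ε := hx₀.1 i₀
  have hcnorm : 0 < ‖c‖ + 1 := by positivity
  set t₁ := ε / (2 * (‖c‖ + 1)) with ht₁
  have ht₁pos : 0 < t₁ := by positivity
  have ht₁e : t₁ * (‖c‖ + 1) = ε / 2 := by
    rw [ht₁]; field_simp
  have hmem : ∀ t ∈ Set.Icc (0:ℝ) t₁, x₀ + t • c ∈ simplexInt n := by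
    intro t ht
    refine ⟨fun i => ?_, ?_⟩
    · have h1 : |c i| ≤ ‖c‖ := by
        simpa [Real.norm_eq_abs] using norm_le_pi_norm c i
      have h2 : ε ≤ x₀ i := hmin i (Finset.mem_univ i)
      have h3 : -(t * |c i|) ≤ t * c i := by nlinarith [neg_abs_le (c i), ht.1]
      have h4 : t * |c i| ≤ t₁ * ‖c‖ := by nlinarith [abs_nonneg (c i), ht.1, ht.2]
      have h5 : t₁ * ‖c‖ < ε := by nlinarith [ht₁pos]
      show 0 < x₀ i + t * c i
      nlinarith
    · have : ∑ i, (x₀ i + t * c i) = 1 := by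
        rw [Finset.sum_add_distrib, hx₀.2, ← Finset.mul_sum, hcsum]; ring
      simpa using this
  set φ : ℝ → ℝ := fun t => fderiv ℝ h (x₀ + t • c) c with hφ
  have hderiv : ∀ t ∈ Set.Icc (0:ℝ) t₁,
      HasDerivAt φ ((fderiv ℝ (fderiv ℝ h) (x₀ + t • c) c) c) t := by
    intro t ht
    have hyU : x₀ + t • c ∈ U := hUsub (hmem t ht)
    have hγ : HasDerivAt (fun s : ℝ => x₀ + s • c) c t := by
      simpa using ((hasDerivAt_id t).smul_const c).const_add x₀
    have hFy : HasFDerivAt (fderiv ℝ h) (fderiv ℝ (fderiv ℝ h) (x₀ + t • c)) (x₀ + t • c) :=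
      (hFd _ hyU).hasFDerivAt
    have hcomp := hFy.comp_hasDerivAt t hγ
    have := hcomp.clm_apply (hasDerivAt_const t c)
    simpa [Function.comp] using this
  have hdpos : ∀ t ∈ Set.Icc (0:ℝ) t₁,
      0 < (fderiv ℝ (fderiv ℝ h) (x₀ + t • c) c) c := by
    intro t ht
    rw [snd_deriv h _ (hFd _ (hUsub (hmem t ht))) c]
    exact hpos _ (hmem t ht) c hc0
  have hmono : StrictMonoOn φ (Set.Icc 0 t₁) := by
    apply strictMonoOn_of_deriv_pos (convex_Icc 0 t₁)
    · intro t ht; exact (hderiv t ht).continuousAt.continuousWithinAt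
    · intro t ht
      rw [interior_Icc] at ht
      have ht' : t ∈ Set.Icc (0:ℝ) t₁ := Set.Ioo_subset_Icc_self ht
      rw [(hderiv t ht').deriv]
      exact hdpos t ht'
  have hlt : φ 0 < φ t₁ :=
    hmono (Set.left_mem_Icc.mpr ht₁pos.le) (Set.right_mem_Icc.mpr ht₁pos.le) ht₁pos
  have ht₁mem : t₁ ∈ Set.Icc (0:ℝ) t₁ := Set.right_mem_Icc.mpr ht₁pos.le
  refine ⟨PH n *ᵥ grad h (x₀ + t₁ • c), ⟨x₀ + t₁ • c, hmem t₁ ht₁mem, rfl⟩, ?_⟩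
  intro T hT u hu husx heq
  have hB : ∀ w : Fin m → ℝ, c ⬝ᵥ (PH n *ᵥ (A *ᵥ w)) = 0 := by
    intro w
    rw [Matrix.mulVec_mulVec, Matrix.dotProduct_mulVec, ← Matrix.mulVec_transpose, hcK]
    simp
  set L : (Fin n → ℝ) →L[ℝ] ℝ := ∑ i, c i • ContinuousLinearMap.proj i with hLdef
  have hLapp : ∀ z, L z = c ⬝ᵥ z := by
    intro z; simp [hLdef, dotProduct]
  set Mc : (Fin m → ℝ) →L[ℝ] (Fin n → ℝ) :=
    LinearMap.toContinuousLinearMap (Matrix.mulVecLin (PH n * A)) with hMcdef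
  have hMc : ∀ w, Mc w = PH n *ᵥ (A *ᵥ w) := by
    intro w; simp [hMcdef, Matrix.mulVec_mulVec]
  have hint : IntervalIntegrable (fun s => PH n *ᵥ (A *ᵥ u s)) volume 0 T := by
    have heqf : (fun s => PH n *ᵥ (A *ᵥ u s)) = fun s => Mc (u s) := by
      funext s; rw [hMc]
    rw [heqf]
    exact ⟨Mc.integrable_comp hu.1, Mc.integrable_comp hu.2⟩
  have hLint : L (∫ s in (0:ℝ)..T, PH n *ᵥ (A *ᵥ u s)) = 0 := by
    rw [← ContinuousLinearMap.intervalIntegral_comp_comm L hint]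
    have : (fun s => L (PH n *ᵥ (A *ᵥ u s))) = fun _ => (0:ℝ) := by
      funext s; rw [hLapp, hB]
    rw [this]
    simp
  have hfin := congrArg L heq
  rw [map_add, hLint, add_zero, hLapp, hLapp, dot_PH _ _ hcsum, dot_PH _ _ hcsum,
    dot_grad, dot_grad] at hfin
  have h0 : φ 0 = fderiv ℝ h x₀ c := by simp [hφ]
  have h1 : φ t₁ = fderiv ℝ h (x₀ + t₁ • c) c := rfl
  rw [← h0, ← h1] at hfin
  exact absurd hfin (ne_of_lt hlt)
end
end

section
/- Let N ≥ 1, and for each i ∈ {1,…,N} let n_i ≥ 2 and let h_i : ℝ^{n_i} → ℝ be twice continuously differentiable on an open set containing Δ_{n_i}° with Hessian positive definite on Δ_{n_i}°. Then the map (x_1, …, x_N) ↦ (P_{H_1} ∇h_1(x_1), …, P_{H_N} ∇h_N(x_N)) is a bijection from Δ_{n_1}° × ⋯ × Δ_{n_N}° onto M_1 × ⋯ × M_N, where M_i := {P_{H_i} ∇h_i(x_i) : x_i ∈ Δ_{n_i}°}. -/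
open Matrix MeasureTheory

noncomputable section

lemma vec_decomp {n : ℕ} (d : Fin n → ℝ) : d = ∑ i, d i • (Pi.single i 1 : Fin n → ℝ) := by
  ext j
  simp [Pi.single_apply, Finset.sum_apply]

lemma lin_expand {n : ℕ} (L : (Fin n → ℝ) →L[ℝ] ℝ) (d : Fin n → ℝ) :
    L d = ∑ j, L (Pi.single j 1) * d j := by
  conv_lhs => rw [vec_decomp d]
  rw [_root_.map_sum]
  simp [mul_comm]

lemma lin_expand' {n : ℕ} (Φ : (Fin n → ℝ) →L[ℝ] ((Fin n → ℝ) →L[ℝ] ℝ)) (d v : Fin n → ℝ) :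
    Φ d v = ∑ i, d i * Φ (Pi.single i 1) v := by
  conv_lhs => rw [vec_decomp d]
  rw [_root_.map_sum]
  simp

lemma bilin_expand {n : ℕ} (Φ : (Fin n → ℝ) →L[ℝ] ((Fin n → ℝ) →L[ℝ] ℝ)) (d : Fin n → ℝ) :
    Φ d d = ∑ i, ∑ j, d i * (Φ (Pi.single i 1) (Pi.single j 1) * d j) := by
  rw [lin_expand (Φ d) d, Finset.sum_comm]
  refine Finset.sum_congr rfl fun i _ => ?_
  rw [lin_expand' Φ d (Pi.single i 1), Finset.sum_mul]
  exact Finset.sum_congr rfl fun j _ => by ring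

lemma blockInj {n : ℕ} (h : (Fin n → ℝ) → ℝ) (U : Set (Fin n → ℝ)) (hU : IsOpen U)
    (hUsub : simplexInt n ⊆ U) (hC2 : ContDiffOn ℝ 2 h U)
    (hpos : ∀ x ∈ simplexInt n, ∀ v : Fin n → ℝ, v ≠ 0 → 0 < v ⬝ᵥ (hess h x *ᵥ v)) :
    Set.InjOn (fun x => PH n *ᵥ grad h x) (simplexInt n) := by
  intro x hx y hy hxy
  by_contra hne
  set d : Fin n → ℝ := y - x with hd
  have hdne : d ≠ 0 := sub_ne_zero.mpr (Ne.symm hne)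
  have hfd1 : ContDiffOn ℝ 1 (fderiv ℝ h) U := hC2.fderiv_of_isOpen hU (by norm_num)
  have hdiff2 : ∀ w ∈ U, DifferentiableAt ℝ (fderiv ℝ h) w := fun w hw =>
    ((hfd1.differentiableOn (by norm_num)).differentiableAt (hU.mem_nhds hw))
  -- segment in simplexInt
  have hseg : ∀ t ∈ Set.Icc (0:ℝ) 1, x + t • d ∈ simplexInt n := by
    intro t ht
    constructor
    · intro i
      have he : x i + t * (y i - x i) = (1 - t) * x i + t * y i := by ring
      simp only [Pi.add_apply, Pi.smul_apply, hd, Pi.sub_apply, smul_eq_mul]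
      rw [he]
      rcases eq_or_lt_of_le ht.1 with h0 | h0
      · simp [← h0]; exact hx.1 i
      rcases eq_or_lt_of_le ht.2 with h1 | h1
      · simp [h1]; exact hy.1 i
      · exact add_pos (mul_pos (by linarith) (hx.1 i)) (mul_pos h0 (hy.1 i))
    · have he : ∑ i, (x i + t * (y i - x i)) = (∑ i, x i) + t * ((∑ i, y i) - ∑ i, x i) := by
        rw [Finset.sum_add_distrib, ← Finset.mul_sum, Finset.sum_sub_distrib]
      simp only [Pi.add_apply, Pi.smul_apply, hd, Pi.sub_apply, smul_eq_mul]
      rw [he, hx.2, hy.2]; ring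
  -- hess identification
  have hessId : ∀ w ∈ U, ∀ i j, hess h w i j
      = fderiv ℝ (fderiv ℝ h) w (Pi.single i 1) (Pi.single j 1) := by
    intro w hw i j
    have hΦ : HasFDerivAt (fderiv ℝ h) (fderiv ℝ (fderiv ℝ h) w) w :=
      (hdiff2 w hw).hasFDerivAt
    have hev := (ContinuousLinearMap.apply ℝ ℝ (Pi.single j 1)).hasFDerivAt.comp w hΦ
    have heq := hev.fderiv
    simp only [hess, Matrix.of_apply]
    rw [show (fun y => fderiv ℝ h y (Pi.single j 1))
        = (⇑(ContinuousLinearMap.apply ℝ ℝ (Pi.single j 1)) ∘ fderiv ℝ h) from rfl, heq]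
    rfl
  -- derivative of φ
  set φ : ℝ → ℝ := fun t => fderiv ℝ h (x + t • d) d with hφ
  have hderiv : ∀ t ∈ Set.Icc (0:ℝ) 1,
      HasDerivAt φ (d ⬝ᵥ (hess h (x + t • d) *ᵥ d)) t := by
    intro t ht
    have hw : x + t • d ∈ U := hUsub (hseg t ht)
    have hΦ : HasFDerivAt (fderiv ℝ h) (fderiv ℝ (fderiv ℝ h) (x + t • d)) (x + t • d) :=
      (hdiff2 _ hw).hasFDerivAt
    have hev := (ContinuousLinearMap.apply ℝ ℝ d).hasFDerivAt.comp _ hΦ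
    have hline : HasDerivAt (fun s : ℝ => x + s • d) d t := by
      simpa using ((hasDerivAt_id t).smul_const d).const_add x
    have := hev.comp_hasDerivAt t hline
    convert this using 1
    show d ⬝ᵥ (hess h (x + t • d) *ᵥ d) = fderiv ℝ (fderiv ℝ h) (x + t • d) d d
    rw [bilin_expand]
    simp only [dotProduct, mulVec, dotProduct]
    refine Finset.sum_congr rfl fun i _ => ?_
    rw [Finset.mul_sum]
    refine Finset.sum_congr rfl fun j _ => ?_
    rw [hessId _ hw i j]
    all_goals rfl
  -- strict monotone
  have hmono : StrictMonoOn φ (Set.Icc (0:ℝ) 1) := by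
    apply strictMonoOn_of_deriv_pos (convex_Icc 0 1)
    · exact fun t ht => ((hderiv t ht).differentiableAt.continuousAt).continuousWithinAt
    · intro t ht
      rw [interior_Icc] at ht
      rw [(hderiv t ⟨le_of_lt ht.1, le_of_lt ht.2⟩).deriv]
      exact hpos _ (hseg t ⟨le_of_lt ht.1, le_of_lt ht.2⟩) d hdne
  have hlt : φ 0 < φ 1 := hmono (by norm_num) (by norm_num) one_pos
  -- but φ 0 = φ 1 from hxy
  have hPH : ∀ v : Fin n → ℝ, ∀ k, (PH n *ᵥ v) k = v k - (n : ℝ)⁻¹ * ∑ j, v j := by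
    intro v k
    simp [PH, mulVec, dotProduct, sub_mul, Finset.sum_sub_distrib, Matrix.one_apply,
      Finset.mul_sum]
  have hgr : ∀ k, grad h y k - grad h x k = (n:ℝ)⁻¹ * ∑ j, grad h y j - (n:ℝ)⁻¹ * ∑ j, grad h x j := by
    intro k
    have := congrFun hxy k
    simp only at this
    rw [hPH, hPH] at this
    linarith
  have hsum : ∑ k, d k = 0 := by
    simp only [hd, Pi.sub_apply, Finset.sum_sub_distrib, hx.2, hy.2]
    ring
  have hφeq : φ 1 = φ 0 := by
    have h0 : φ 0 = fderiv ℝ h x d := by simp [hφ]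
    have h1 : φ 1 = fderiv ℝ h y d := by
      have hxy1 : x + (1:ℝ) • d = y := by simp [hd]
      show fderiv ℝ h (x + (1:ℝ) • d) d = fderiv ℝ h y d
      rw [hxy1]
    rw [h0, h1, lin_expand, lin_expand]
    have : ∀ k, (fderiv ℝ h y) (Pi.single k 1) * d k - (fderiv ℝ h x) (Pi.single k 1) * d k
        = ((n:ℝ)⁻¹ * ∑ j, grad h y j - (n:ℝ)⁻¹ * ∑ j, grad h x j) * d k := by
      intro k
      rw [← sub_mul]
      congr 1
      exact hgr k
    rw [← sub_eq_zero, ← Finset.sum_sub_distrib]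
    calc (∑ k, ((fderiv ℝ h y) (Pi.single k 1) * d k - (fderiv ℝ h x) (Pi.single k 1) * d k))
        = ∑ k, ((n:ℝ)⁻¹ * ∑ j, grad h y j - (n:ℝ)⁻¹ * ∑ j, grad h x j) * d k :=
          Finset.sum_congr rfl fun k _ => this k
      _ = ((n:ℝ)⁻¹ * ∑ j, grad h y j - (n:ℝ)⁻¹ * ∑ j, grad h x j) * ∑ k, d k := by
          rw [← Finset.mul_sum]
      _ = 0 := by rw [hsum, mul_zero]
  exact absurd hφeq (ne_of_gt hlt)

/-- (Bijectivity content of Lemma 3 of the paper, blockwise.) For each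
learner `i`, let `h i` be C² near `Δ_{n i}°` with positive definite Hessian there. Then
`(x₁, …, x_N) ↦ (P_{H₁} ∇h₁(x₁), …, P_{H_N} ∇h_N(x_N))` is a bijection from
`Δ_{n₁}° × ⋯ × Δ_{n_N}°` onto `M₁ × ⋯ × M_N` with `M_i = {P_{H_i} ∇h_i(x) : x ∈ Δ_{n_i}°}`. -/
theorem stmt14 {N : ℕ} (hN : 1 ≤ N) (n : Fin N → ℕ) (hn : ∀ i, 2 ≤ n i)
    (h : (i : Fin N) → (Fin (n i) → ℝ) → ℝ)
    (U : (i : Fin N) → Set (Fin (n i) → ℝ)) (hU : ∀ i, IsOpen (U i))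
    (hUsub : ∀ i, simplexInt (n i) ⊆ U i)
    (hC2 : ∀ i, ContDiffOn ℝ 2 (h i) (U i))
    (hpos : ∀ i, ∀ x ∈ simplexInt (n i), ∀ v : Fin (n i) → ℝ, v ≠ 0 →
      0 < v ⬝ᵥ (hess (h i) x *ᵥ v)) :
    Set.BijOn
      (fun (x : (i : Fin N) → Fin (n i) → ℝ) (i : Fin N) => PH (n i) *ᵥ grad (h i) (x i))
      (Set.univ.pi fun i => simplexInt (n i))
      (Set.univ.pi fun i => (fun xi => PH (n i) *ᵥ grad (h i) xi) '' simplexInt (n i)) := by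
  refine ⟨?_, ?_, ?_⟩
  · intro x hx i _
    exact ⟨x i, hx i (Set.mem_univ i), rfl⟩
  · intro a ha b hb hab
    funext i
    exact blockInj (h i) (U i) (hU i) (hUsub i) (hC2 i) (hpos i)
      (ha i (Set.mem_univ i)) (hb i (Set.mem_univ i)) (congrFun hab i)
  · intro y hy
    choose x hx1 hx2 using fun i => hy i (Set.mem_univ i)
    exact ⟨x, fun i _ => hx1 i, funext hx2⟩
end
end

section
/- Define the smooth vector fields η₁, η₂ : ℝ² → ℝ² by η₁(α, β) = (α(1−α), −β(1−β)) and η₂(α, β) = ((12β−7)α(1−α), (4−12α)β(1−β)). Then their Lie bracket satisfies [η₁, η₂](α, β) = −12αβ(1−α)(1−β)·(1, 1) for all (α, β) ∈ ℝ², and for every (α, β) with 0 < α < 1 and 0 < β < 1, the determinant of the 2×2 matrix with columns η₁(α, β) and [η₁, η₂](α, β) equals −12αβ(1−α)(1−β)(α(1−α) + β(1−β)), which is nonzero; hence η₁(α, β) and [η₁, η₂](α, β) are linearly independent for all (α, β) ∈ (0,1)². -/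
open Matrix MeasureTheory

noncomputable section

/-- The Lie bracket `[X, Y](x) = DY(x) X(x) - DX(x) Y(x)` of two vector fields on `ℝ^d`. -/
def lieBracket {d : ℕ} (X Y : (Fin d → ℝ) → (Fin d → ℝ)) (x : Fin d → ℝ) : Fin d → ℝ :=
  fderiv ℝ Y x (X x) - fderiv ℝ X x (Y x)

/-- The vector field `η₁(α, β) = (α(1-α), -β(1-β))`. -/
def eta1 : (Fin 2 → ℝ) → (Fin 2 → ℝ) :=
  fun p => ![p 0 * (1 - p 0), -(p 1 * (1 - p 1))]

/-- The vector field `η₂(α, β) = ((12β-7)α(1-α), (4-12α)β(1-β))`. -/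
def eta2 : (Fin 2 → ℝ) → (Fin 2 → ℝ) :=
  fun p => ![(12 * p 1 - 7) * (p 0 * (1 - p 0)), (4 - 12 * p 0) * (p 1 * (1 - p 1))]

open ContinuousLinearMap

abbrev pr (i : Fin 2) : (Fin 2 → ℝ) →L[ℝ] ℝ :=
  ContinuousLinearMap.proj (R := ℝ) (φ := fun _ : Fin 2 => ℝ) i

lemma hasFDerivAt_eta1 (p : Fin 2 → ℝ) :
    HasFDerivAt eta1
      (ContinuousLinearMap.pi ![(1 - 2 * p 0) • pr 0, (-(1 - 2 * p 1)) • pr 1]) p := by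
  apply hasFDerivAt_pi''
  intro i
  fin_cases i
  · have h := (hasFDerivAt_apply (𝕜 := ℝ) 0 p).mul
      ((hasFDerivAt_const (1:ℝ) p).sub (hasFDerivAt_apply (𝕜 := ℝ) 0 p))
    refine (h.congr_of_eventuallyEq (Filter.Eventually.of_forall fun x => ?_)).congr_fderiv ?_
    · simp [eta1]
    · ext v; simp [eta1]; ring
  · have h := ((hasFDerivAt_apply (𝕜 := ℝ) 1 p).mul
      ((hasFDerivAt_const (1:ℝ) p).sub (hasFDerivAt_apply (𝕜 := ℝ) 1 p))).neg
    refine (h.congr_of_eventuallyEq (Filter.Eventually.of_forall fun x => ?_)).congr_fderiv ?_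
    · simp [eta1]
    · ext v; simp [eta1]; ring

lemma hasFDerivAt_eta2 (p : Fin 2 → ℝ) :
    HasFDerivAt eta2
      (ContinuousLinearMap.pi
        ![(12 * (p 0 * (1 - p 0))) • pr 1 + ((12 * p 1 - 7) * (1 - 2 * p 0)) • pr 0,
          (-12 * (p 1 * (1 - p 1))) • pr 0 + ((4 - 12 * p 0) * (1 - 2 * p 1)) • pr 1]) p := by
  apply hasFDerivAt_pi''
  intro i
  fin_cases i
  · have h := (((hasFDerivAt_apply (𝕜 := ℝ) 1 p).const_mul (12:ℝ)).sub
        (hasFDerivAt_const (7:ℝ) p)).mul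
      ((hasFDerivAt_apply (𝕜 := ℝ) 0 p).mul
        ((hasFDerivAt_const (1:ℝ) p).sub (hasFDerivAt_apply (𝕜 := ℝ) 0 p)))
    refine (h.congr_of_eventuallyEq (Filter.Eventually.of_forall fun x => ?_)).congr_fderiv ?_
    · simp [eta2]
    · ext v; simp [eta2]; ring
  · have h := ((hasFDerivAt_const (4:ℝ) p).sub
        ((hasFDerivAt_apply (𝕜 := ℝ) 0 p).const_mul (12:ℝ))).mul
      ((hasFDerivAt_apply (𝕜 := ℝ) 1 p).mul
        ((hasFDerivAt_const (1:ℝ) p).sub (hasFDerivAt_apply (𝕜 := ℝ) 1 p)))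
    refine (h.congr_of_eventuallyEq (Filter.Eventually.of_forall fun x => ?_)).congr_fderiv ?_
    · simp [eta2]
    · ext v; simp [eta2]; ring

lemma fderiv_eta1 (p v : Fin 2 → ℝ) :
    fderiv ℝ eta1 p v = ![(1 - 2 * p 0) * v 0, -((1 - 2 * p 1) * v 1)] := by
  rw [(hasFDerivAt_eta1 p).fderiv]
  funext i; fin_cases i <;> simp <;> ring

lemma fderiv_eta2 (p v : Fin 2 → ℝ) :
    fderiv ℝ eta2 p v =
      ![12 * (p 0 * (1 - p 0)) * v 1 + (12 * p 1 - 7) * (1 - 2 * p 0) * v 0,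
        -12 * (p 1 * (1 - p 1)) * v 0 + (4 - 12 * p 0) * (1 - 2 * p 1) * v 1] := by
  rw [(hasFDerivAt_eta2 p).fderiv]
  funext i; fin_cases i <;> simp <;> ring

/-- (Regulated Matching Pennies example.) The Lie bracket of `η₁, η₂` is
`[η₁, η₂](α, β) = -12αβ(1-α)(1-β)·(1,1)`, and on `(0,1)²` the determinant of the matrix with
columns `η₁` and `[η₁, η₂]` equals `-12αβ(1-α)(1-β)(α(1-α)+β(1-β)) ≠ 0`; hence `η₁(α, β)`
and `[η₁, η₂](α, β)` are linearly independent there. -/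
theorem stmt18 :
    (∀ p : Fin 2 → ℝ,
      lieBracket eta1 eta2 p
        = (-12 * p 0 * p 1 * (1 - p 0) * (1 - p 1)) • (![1, 1] : Fin 2 → ℝ)) ∧
    (∀ p : Fin 2 → ℝ, 0 < p 0 → p 0 < 1 → 0 < p 1 → p 1 < 1 →
      (Matrix.det !![eta1 p 0, lieBracket eta1 eta2 p 0;
                     eta1 p 1, lieBracket eta1 eta2 p 1]
          = -12 * p 0 * p 1 * (1 - p 0) * (1 - p 1)
              * (p 0 * (1 - p 0) + p 1 * (1 - p 1))) ∧
      Matrix.det !![eta1 p 0, lieBracket eta1 eta2 p 0;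
                    eta1 p 1, lieBracket eta1 eta2 p 1] ≠ 0 ∧
      LinearIndependent ℝ ![eta1 p, lieBracket eta1 eta2 p]) := by
  have hbr : ∀ p : Fin 2 → ℝ,
      lieBracket eta1 eta2 p
        = (-12 * p 0 * p 1 * (1 - p 0) * (1 - p 1)) • (![1, 1] : Fin 2 → ℝ) := by
    intro p
    funext i
    fin_cases i <;>
      simp [lieBracket, fderiv_eta1, fderiv_eta2, eta1, eta2] <;> ring
  refine ⟨hbr, fun p h0 h1 h2 h3 => ?_⟩
  have hdet : Matrix.det !![eta1 p 0, lieBracket eta1 eta2 p 0;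
                     eta1 p 1, lieBracket eta1 eta2 p 1]
          = -12 * p 0 * p 1 * (1 - p 0) * (1 - p 1)
              * (p 0 * (1 - p 0) + p 1 * (1 - p 1)) := by
    rw [Matrix.det_fin_two_of, hbr]
    simp [eta1]
    ring
  have hpos : 0 < 12 * p 0 * p 1 * (1 - p 0) * (1 - p 1)
      * (p 0 * (1 - p 0) + p 1 * (1 - p 1)) := by
    have h4 : 0 < 1 - p 0 := by linarith
    have h5 : 0 < 1 - p 1 := by linarith
    positivity
  have hne : Matrix.det !![eta1 p 0, lieBracket eta1 eta2 p 0;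
                    eta1 p 1, lieBracket eta1 eta2 p 1] ≠ 0 := by
    rw [hdet]; intro hc; nlinarith
  refine ⟨hdet, hne, ?_⟩
  have : LinearIndependent ℝ
      (fun i => (Matrix.of ![eta1 p, lieBracket eta1 eta2 p] : Matrix (Fin 2) (Fin 2) ℝ) i) := by
    change LinearIndependent ℝ (Matrix.of ![eta1 p, lieBracket eta1 eta2 p] : Matrix (Fin 2) (Fin 2) ℝ).row
    rw [Matrix.linearIndependent_rows_iff_isUnit, Matrix.isUnit_iff_isUnit_det,
      isUnit_iff_ne_zero]
    have : (Matrix.of ![eta1 p, lieBracket eta1 eta2 p] : Matrix (Fin 2) (Fin 2) ℝ).det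
        = Matrix.det !![eta1 p 0, lieBracket eta1 eta2 p 0;
                    eta1 p 1, lieBracket eta1 eta2 p 1] := by
      rw [Matrix.det_fin_two, Matrix.det_fin_two]
      simp
      ring
    rw [this]
    exact hne
  exact this
end
end
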